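/- arXiv:1402.2125 — 9 statements merged into one kernel-verified Lean document; each statement's English description precedes it below -/
import Mathlib

section
/- For any totally irrational rotation α of 𝕋^s, every special region for α is a bounded remainder set for the rotation T(x) = x + α. -/
open MeasureTheory

noncomputable section

/-- Embedding of an integer vector into `ℝ^s`. -/
def intVec (s : ℕ) (m : Fin s → ℤ) : Fin s → ℝ := fun i => (m i : ℝ)

/-- `y` belongs to `A` modulo `ℤ^s`. -/
def ModMem (s : ℕ) (y : Fin s → ℝ) (A : Set (Fin s → ℝ)) : Prop :=
  ∃ m : Fin s → ℤ, y + intVec s m ∈ A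

/-- `α` is totally irrational: `1, α 0, …, α (s-1)` are `ℚ`-linearly independent. -/
def TotallyIrrational (s : ℕ) (α : Fin s → ℝ) : Prop :=
  ∀ (m : Fin s → ℤ) (n : ℤ), (∑ i, (m i : ℝ) * α i) + (n : ℝ) = 0 → m = 0 ∧ n = 0

/-- `A ⊆ 𝕋^s` (given by a lift in `ℝ^s`) is a bounded remainder set for the
rotation by `α`. -/
def IsBRS (s : ℕ) (α : Fin s → ℝ) (A : Set (Fin s → ℝ)) : Prop :=
  ∃ C : ℝ, ∀ (x : Fin s → ℝ) (N : ℕ),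
    |(∑ n ∈ Finset.range N,
        Set.indicator {y : Fin s → ℝ | ModMem s y A} (fun _ => (1:ℝ)) (x + n • α))
      - N * (volume A).toReal| ≤ C

end


noncomputable section

/-- The vector `α' = (α, 1) ∈ ℝ^{s+1}`. -/
def alphaExt (s : ℕ) (α : Fin s → ℝ) : Fin (s+1) → ℝ := Fin.snoc α 1

/-- The lattice `Λ ⊆ ℝ^{s+1}` generated by `(α,1)` and `e_1, …, e_s`. -/
def Lam (s : ℕ) (α : Fin s → ℝ) : Set (Fin (s+1) → ℝ) :=
  {x | ∃ (n : ℤ) (a : Fin s → ℤ),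
    x = (n : ℝ) • alphaExt s α + Fin.snoc (fun i => (a i : ℝ)) 0}

/-- Projection `φ : ℝ^{s+1} → ℝ^s` to the first `s` coordinates. -/
def phiProj (s : ℕ) (x : Fin (s+1) → ℝ) : Fin s → ℝ := fun i => x i.castSucc

/-- Half-open parallelotope generated by `v_1, …, v_m`. -/
def Ptope {m : ℕ} {E : Type*} [AddCommMonoid E] [Module ℝ E]
    (v : Fin m → E) : Set E :=
  {x | ∃ t : Fin m → ℝ, (∀ i, 0 ≤ t i ∧ t i < 1) ∧ x = ∑ i, t i • v i}

/-- The set of `ℤ`-linear combinations of a family of vectors. -/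
def zSpanSet {m : ℕ} {E : Type*} [AddCommMonoid E] [Module ℝ E]
    (v : Fin m → E) : Set E :=
  {x | ∃ c : Fin m → ℤ, x = ∑ i, (c i : ℝ) • v i}

/-- The special region associated to a basis `v` of `Λ`:
`A = φ(P(v_1,…,v_s))` (condition (S1)). -/
def specialRegionOf (s : ℕ) (v : Fin (s+1) → (Fin (s+1) → ℝ)) : Set (Fin s → ℝ) :=
  (phiProj s) '' (Ptope (fun i : Fin s => v i.castSucc))

/-- Conditions (S2)-(S4) making `v` a basis defining a special region for `α`. -/
def IsSpecialBasis (s : ℕ) (α : Fin s → ℝ) (v : Fin (s+1) → (Fin (s+1) → ℝ)) : Prop :=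
  (phiProj s (v (Fin.last s)) ∈ specialRegionOf s v) ∧
  (zSpanSet v = Lam s α) ∧
  (∀ I : Finset (Fin s),
    0 < v (Fin.last s) (Fin.last s) - ∑ i ∈ I, v i.castSucc (Fin.last s))

/-- `A` is a special region for `α`. -/
def IsSpecialRegion (s : ℕ) (α : Fin s → ℝ) (A : Set (Fin s → ℝ)) : Prop :=
  ∃ v : Fin (s+1) → (Fin (s+1) → ℝ), IsSpecialBasis s α v ∧ A = specialRegionOf s v

/-- The affine hyperplane `H_k = span(v_1,…,v_s) + k v_{s+1}`. -/
def Hplane (s : ℕ) (v : Fin (s+1) → (Fin (s+1) → ℝ)) (k : ℤ) : Set (Fin (s+1) → ℝ) :=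
  {x | ∃ c : Fin s → ℝ, x = (∑ i, c i • v i.castSucc) + (k : ℝ) • v (Fin.last s)}

end
noncomputable section
namespace BRSAux

/-- The standard generators of `Λ`: `e_1, …, e_s` followed by `α' = (α,1)`. -/
def Evec (s : ℕ) (α : Fin s → ℝ) : Fin (s+1) → Fin (s+1) → ℝ :=
  Fin.snoc (fun j : Fin s => Pi.single j.castSucc 1) (alphaExt s α)

lemma sum_single {s : ℕ} (b : Fin s → ℝ) :
    ∑ j : Fin s, b j • Pi.single (M := fun _ : Fin (s+1) => ℝ) j.castSucc (1:ℝ)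
      = Fin.snoc b 0 := by
  funext k
  rw [Finset.sum_apply]
  induction k using Fin.lastCases with
  | last =>
    rw [Fin.snoc_last]
    apply Finset.sum_eq_zero
    intro j _
    have : Fin.last s ≠ j.castSucc := (Fin.castSucc_lt_last j).ne'
    simp [Pi.single_apply, this]
  | cast j₀ =>
    rw [Fin.snoc_castSucc]
    rw [Finset.sum_eq_single j₀]
    · simp
    · intro j _ hj
      have : j₀.castSucc ≠ j.castSucc := by
        simp [Fin.castSucc_inj]; exact fun h => hj h.symm
      simp [Pi.single_apply, this]
    · intro h; exact absurd (Finset.mem_univ j₀) h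

lemma sumE {s : ℕ} (α : Fin s → ℝ) (c : Fin (s+1) → ℤ) :
    ∑ i, (c i : ℝ) • Evec s α i
      = (c (Fin.last s) : ℝ) • alphaExt s α
        + Fin.snoc (fun j => (c j.castSucc : ℝ)) 0 := by
  rw [Fin.sum_univ_castSucc]
  have h1 : ∀ j : Fin s, Evec s α j.castSucc
      = Pi.single (M := fun _ : Fin (s+1) => ℝ) j.castSucc (1:ℝ) := by
    intro j; simp [Evec]
  have h2 : Evec s α (Fin.last s) = alphaExt s α := by simp [Evec]
  rw [h2]
  rw [show (∑ j : Fin s, (c j.castSucc : ℝ) • Evec s α j.castSucc)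
      = ∑ j : Fin s, (c j.castSucc : ℝ) •
          Pi.single (M := fun _ : Fin (s+1) => ℝ) j.castSucc (1:ℝ) from
    Finset.sum_congr rfl fun j _ => by rw [h1]]
  rw [sum_single]
  exact add_comm _ _

lemma Lam_eq {s : ℕ} (α : Fin s → ℝ) : Lam s α = zSpanSet (Evec s α) := by
  ext x
  constructor
  · rintro ⟨n, a, rfl⟩
    refine ⟨Fin.snoc a n, ?_⟩
    rw [sumE]
    simp
  · rintro ⟨c, rfl⟩
    refine ⟨c (Fin.last s), fun j => c j.castSucc, ?_⟩
    rw [sumE]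

lemma mem_zSpanSet_self {s : ℕ} (v : Fin s → (Fin s → ℝ)) (i : Fin s) :
    v i ∈ zSpanSet v := by
  refine ⟨Pi.single i 1, ?_⟩
  rw [Finset.sum_eq_single i]
  · simp
  · intro j _ hj; simp [Pi.single_apply, hj]
  · intro h; exact absurd (Finset.mem_univ i) h

lemma detE {s : ℕ} (α : Fin s → ℝ) : (Matrix.of (Evec s α)).det = 1 := by
  rw [Matrix.det_succ_column _ (Fin.last s)]
  rw [Finset.sum_eq_single (Fin.last s)]
  · have h1 : Matrix.of (Evec s α) (Fin.last s) (Fin.last s) = 1 := by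
      simp [Evec, alphaExt]
    rw [h1]
    have h2 : ((Matrix.of (Evec s α)).submatrix (Fin.last s).succAbove
        (Fin.last s).succAbove) = 1 := by
      ext i j
      simp only [Matrix.submatrix_apply, Fin.succAbove_last, Matrix.of_apply]
      have : Evec s α i.castSucc = Pi.single (M := fun _ : Fin (s+1) => ℝ) i.castSucc 1 := by
        simp [Evec]
      rw [this, Pi.single_apply, Matrix.one_apply]
      simp [Fin.castSucc_inj, eq_comm]
    rw [h2, Matrix.det_one]
    have : ((Fin.last s : Fin (s+1)) : ℕ) = s := rfl
    rw [this]
    rw [show (-1 : ℝ) ^ (s + s) = 1 from Even.neg_one_pow ⟨s, rfl⟩]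
    ring
  · intro i _ hi
    obtain ⟨j, rfl⟩ := Fin.exists_castSucc_eq.2 hi
    have : Matrix.of (Evec s α) j.castSucc (Fin.last s) = 0 := by
      have h1 : Evec s α j.castSucc = Pi.single (M := fun _ : Fin (s+1) => ℝ) j.castSucc 1 := by
        simp [Evec]
      simp only [Matrix.of_apply, h1, Pi.single_apply]
      have : Fin.last s ≠ j.castSucc := (Fin.castSucc_lt_last j).ne'
      simp [this]
    rw [this]; ring
  · intro h; exact absurd (Finset.mem_univ _) h

lemma unimodular {s : ℕ} (α : Fin s → ℝ) (v : Fin (s+1) → (Fin (s+1) → ℝ))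
    (hvE : zSpanSet v = zSpanSet (Evec s α)) :
    (Matrix.of v).det = 1 ∨ (Matrix.of v).det = -1 := by
  have hvmem : ∀ i, v i ∈ zSpanSet (Evec s α) := fun i =>
    hvE ▸ mem_zSpanSet_self v i
  have hEmem : ∀ i, Evec s α i ∈ zSpanSet v := fun i =>
    hvE ▸ mem_zSpanSet_self (Evec s α) i
  choose P hP using hvmem
  choose Q hQ using hEmem
  have hPmat : Matrix.of v = ((Matrix.of P).map (Int.cast : ℤ → ℝ)) * Matrix.of (Evec s α) := by
    ext i j
    rw [Matrix.mul_apply]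
    have := congrFun (hP i) j
    rw [Finset.sum_apply] at this
    simpa [Matrix.map_apply] using this
  have hQmat : Matrix.of (Evec s α) = ((Matrix.of Q).map (Int.cast : ℤ → ℝ)) * Matrix.of v := by
    ext i j
    rw [Matrix.mul_apply]
    have := congrFun (hQ i) j
    rw [Finset.sum_apply] at this
    simpa [Matrix.map_apply] using this
  have hdet : ((Matrix.of Q).map (Int.cast : ℤ → ℝ)).det * ((Matrix.of P).map (Int.cast : ℤ → ℝ)).det = 1 := by
    have h1 : (Matrix.of (Evec s α)).det
        = ((Matrix.of Q).map (Int.cast : ℤ → ℝ)).det * (((Matrix.of P).map (Int.cast : ℤ → ℝ)).det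
          * (Matrix.of (Evec s α)).det) := by
      conv_lhs => rw [hQmat, hPmat]
      rw [Matrix.det_mul, Matrix.det_mul]
    rw [detE] at h1
    linarith [h1]
  have hcast : ∀ (R : Matrix (Fin (s+1)) (Fin (s+1)) ℤ),
      (R.map (Int.cast : ℤ → ℝ)).det = ((R.det : ℤ) : ℝ) := by
    intro R
    rw [show R.map (Int.cast : ℤ → ℝ) = (Int.castRingHom ℝ).mapMatrix R from rfl,
      ← RingHom.map_det]
    rfl
  rw [hcast (Matrix.of P), hcast (Matrix.of Q)] at hdet
  have hZ : (Matrix.of Q).det * (Matrix.of P).det = 1 := by exact_mod_cast hdet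
  have hP1 : (Matrix.of P).det = 1 ∨ (Matrix.of P).det = -1 := by
    rcases Int.eq_one_or_neg_one_of_mul_eq_one (by linarith [hZ] : (Matrix.of P).det * (Matrix.of Q).det = 1) with h | h
    · exact Or.inl h
    · exact Or.inr h
  have hdetv : (Matrix.of v).det = (((Matrix.of P).det : ℤ) : ℝ) * 1 := by
    rw [hPmat, Matrix.det_mul, hcast (Matrix.of P), detE]
  rcases hP1 with h | h
  · left; rw [hdetv, h]; norm_num
  · right; rw [hdetv, h]; norm_num

end BRSAux
end


noncomputable section

/-- For any totally irrational rotation `α` of `𝕋^s`, every special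
region for `α` is a bounded remainder set. -/
theorem special_region_is_BRS
    (s : ℕ) (α : Fin s → ℝ) (hα : TotallyIrrational s α)
    (A : Set (Fin s → ℝ)) (hA : IsSpecialRegion s α A) :
    IsBRS s α A := by
  classical
  obtain ⟨v, ⟨hS2, hS3, hS4⟩, hAeq⟩ := hA
  subst hAeq
  -- the matrix of the projected basis vectors (rows)
  obtain ⟨M, hMdef⟩ : ∃ M : Matrix (Fin s) (Fin s) ℝ,
      ∀ i j, M i j = v i.castSucc j.castSucc := ⟨Matrix.of fun i j => v i.castSucc j.castSucc,
        fun _ _ => rfl⟩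
  -- membership characterization of the special region
  have memA : ∀ y : Fin s → ℝ, y ∈ specialRegionOf s v ↔
      ∃ t : Fin s → ℝ, (∀ i, 0 ≤ t i ∧ t i < 1) ∧ y = Matrix.vecMul t M := by
    intro y
    have hvm : ∀ (t : Fin s → ℝ) (j : Fin s),
        Matrix.vecMul t M j = ∑ i, t i * v i.castSucc j.castSucc := by
      intro t j
      simp only [Matrix.vecMul, dotProduct]
      exact Finset.sum_congr rfl fun i _ => by rw [hMdef]
    constructor
    · rintro ⟨p, ⟨t, ht, rfl⟩, rfl⟩
      refine ⟨t, ht, ?_⟩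
      funext j
      rw [hvm]
      simp [phiProj, Finset.sum_apply]
    · rintro ⟨t, ht, rfl⟩
      refine ⟨∑ i, t i • v i.castSucc, ⟨t, ht, rfl⟩, ?_⟩
      funext j
      rw [hvm]
      simp [phiProj, Finset.sum_apply]
  obtain ⟨w, hw, hgw⟩ := (memA _).1 hS2
  -- γ
  obtain ⟨γ, hγdef⟩ : ∃ γ : ℝ,
      γ = v (Fin.last s) (Fin.last s) - ∑ i, w i * v i.castSucc (Fin.last s) := ⟨_, rfl⟩
  -- decomposition of the last basis vector
  have hvlast : v (Fin.last s)
      = (∑ i, w i • v i.castSucc)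
        + γ • Pi.single (M := fun _ : Fin (s+1) => ℝ) (Fin.last s) 1 := by
    funext j
    induction j using Fin.lastCases with
    | last =>
      simp only [Pi.add_apply, Finset.sum_apply, Pi.smul_apply, smul_eq_mul,
        Pi.single_apply, if_pos rfl, hγdef]
      simp only [if_true]
      ring
    | cast j =>
      have h2 := congrFun hgw j
      simp only [phiProj] at h2
      simp only [Pi.add_apply, Finset.sum_apply, Pi.smul_apply, smul_eq_mul, Pi.single_apply]
      rw [if_neg (Fin.castSucc_lt_last j).ne, h2]
      simp only [Matrix.vecMul, dotProduct]
      rw [Finset.sum_congr rfl fun i _ => by rw [hMdef]]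
      ring
  -- determinant identity
  have hdetB : (Matrix.of v).det = γ * M.det := by
    conv_lhs => rw [← Matrix.updateRow_eq_self (Matrix.of v) (Fin.last s)]
    rw [show (Matrix.of v) (Fin.last s) = (∑ i, w i • v i.castSucc)
        + γ • Pi.single (M := fun _ : Fin (s+1) => ℝ) (Fin.last s) 1 from hvlast]
    rw [Matrix.det_updateRow_add, Matrix.det_updateRow_smul]
    have hzero : ((Matrix.of v).updateRow (Fin.last s) (∑ i, w i • v i.castSucc)).det = 0 := by
      have harg : (∑ i, w i • v i.castSucc)
          = (0:ℝ) • (Matrix.of v) (Fin.last s)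
            + ∑ k ∈ Finset.univ.erase (Fin.last s),
                ((Fin.snoc w (0:ℝ) : Fin (s+1) → ℝ) k) • (Matrix.of v) k := by
        rw [zero_smul, zero_add]
        have h1 : ∑ k ∈ Finset.univ.erase (Fin.last s),
            ((Fin.snoc w (0:ℝ) : Fin (s+1) → ℝ) k) • (Matrix.of v) k
            = ∑ k : Fin (s+1), ((Fin.snoc w (0:ℝ) : Fin (s+1) → ℝ) k) • (Matrix.of v) k := by
          rw [← Finset.add_sum_erase _ _ (Finset.mem_univ (Fin.last s))]
          simp
        rw [h1, Fin.sum_univ_castSucc]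
        simp
        rfl
      rw [harg, Matrix.det_updateRow_sum_aux (Matrix.of v)
        (Finset.univ.erase (Fin.last s)) (Finset.notMem_erase (Fin.last s) Finset.univ)
        (Fin.snoc w (0:ℝ)) 0]
      simp
    have hexp : ((Matrix.of v).updateRow (Fin.last s)
        (Pi.single (M := fun _ : Fin (s+1) => ℝ) (Fin.last s) 1)).det = M.det := by
      rw [Matrix.det_succ_row _ (Fin.last s)]
      rw [Finset.sum_eq_single (Fin.last s)]
      · have h2 : (((Matrix.of v).updateRow (Fin.last s)
            (Pi.single (M := fun _ : Fin (s+1) => ℝ) (Fin.last s) 1)).submatrix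
            (Fin.last s).succAbove (Fin.last s).succAbove) = M := by
          ext i j
          simp only [Matrix.submatrix_apply, Fin.succAbove_last]
          rw [Matrix.updateRow_ne (Fin.castSucc_lt_last i).ne]
          exact (hMdef i j).symm
        rw [h2]
        simp only [Matrix.updateRow_self, Pi.single_eq_same, Fin.val_last]
        rw [show (-1 : ℝ) ^ (s + s) = 1 from Even.neg_one_pow ⟨s, rfl⟩]
        ring
      · intro j _ hj
        simp only [Matrix.updateRow_self, Pi.single_apply, if_neg hj]
        ring
      · exact fun h => absurd (Finset.mem_univ _) h
    rw [hzero, hexp]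
    ring
  have hdet1 : (Matrix.of v).det = 1 ∨ (Matrix.of v).det = -1 :=
    BRSAux.unimodular α v (hS3.trans (BRSAux.Lam_eq α))
  have habs : |γ * M.det| = 1 := by
    rw [← hdetB]
    rcases hdet1 with h | h <;> rw [h] <;> norm_num
  have hMne : IsUnit M.det := by
    rw [isUnit_iff_ne_zero]
    intro h
    rw [h, mul_zero, abs_zero] at habs
    norm_num at habs
  -- coordinates
  obtain ⟨u, hudef⟩ : ∃ u : (Fin s → ℝ) → (Fin s → ℝ),
      ∀ x, u x = Matrix.vecMul x M⁻¹ := ⟨_, fun _ => rfl⟩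
  have hu : ∀ x : Fin s → ℝ, Matrix.vecMul (u x) M = x := by
    intro x
    rw [hudef, Matrix.vecMul_vecMul, Matrix.nonsing_inv_mul M hMne, Matrix.vecMul_one]
  have huniq : ∀ t t' : Fin s → ℝ, Matrix.vecMul t M = Matrix.vecMul t' M → t = t' := by
    intro t t' h
    have h2 := congrArg (fun z => Matrix.vecMul z M⁻¹) h
    simpa [Matrix.vecMul_vecMul, Matrix.mul_nonsing_inv M hMne, Matrix.vecMul_one] using h2
  -- the counting function
  obtain ⟨F, hFdef⟩ : ∃ F : (Fin s → ℝ) → ℤ → ℝ, ∀ x k,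
      F x k = (∑ i, ((-⌊u x i + (k:ℝ) * w i⌋ : ℤ) : ℝ) * v i.castSucc (Fin.last s))
        + (k:ℝ) * v (Fin.last s) (Fin.last s) := ⟨_, fun _ _ => rfl⟩
  -- LA : each k gives an integer orbit time
  have hvmj : ∀ (t : Fin s → ℝ) (j : Fin s),
      Matrix.vecMul t M j = ∑ i, t i * v i.castSucc j.castSucc := by
    intro t j
    simp only [Matrix.vecMul, dotProduct]
    exact Finset.sum_congr rfl fun i _ => by rw [hMdef]
  have LA : ∀ (x : Fin s → ℝ) (k : ℤ), ∃ n : ℤ, (n:ℝ) = F x k ∧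
      ModMem s (x + (n:ℝ) • α) (specialRegionOf s v) := by
    intro x k
    have hlam : (∑ i, ((-⌊u x i + (k:ℝ) * w i⌋ : ℤ) : ℝ) • v i.castSucc
        + (k:ℝ) • v (Fin.last s)) ∈ Lam s α := by
      rw [← hS3]
      refine ⟨Fin.snoc (fun i => -⌊u x i + (k:ℝ) * w i⌋) k, ?_⟩
      rw [Fin.sum_univ_castSucc]
      simp
    obtain ⟨n, a, hna⟩ := hlam
    refine ⟨n, ?_, ?_⟩
    · have h1 := congrFun hna (Fin.last s)
      simp only [Pi.add_apply, Finset.sum_apply, Pi.smul_apply, smul_eq_mul,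
        alphaExt, Fin.snoc_last] at h1
      rw [hFdef]
      push_cast at h1 ⊢
      linarith [h1]
    · refine ⟨a, ?_⟩
      rw [memA]
      refine ⟨fun i => Int.fract (u x i + (k:ℝ) * w i),
        fun i => ⟨Int.fract_nonneg _, Int.fract_lt_one _⟩, ?_⟩
      funext j
      have h2 := congrFun hna (Fin.castSucc j)
      simp only [Pi.add_apply, Finset.sum_apply, Pi.smul_apply, smul_eq_mul,
        alphaExt, Fin.snoc_castSucc] at h2
      have h3 := congrFun (hu x) j
      have h4 := congrFun hgw j
      simp only [phiProj] at h4
      rw [hvmj] at h3 h4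
      simp only [Pi.add_apply, Pi.smul_apply, smul_eq_mul, intVec]
      rw [hvmj]
      have expand : ∑ i, Int.fract (u x i + (k:ℝ) * w i) * v i.castSucc j.castSucc
          = (∑ i, u x i * v i.castSucc j.castSucc)
            + (k:ℝ) * (∑ i, w i * v i.castSucc j.castSucc)
            + ∑ i, ((-⌊u x i + (k:ℝ) * w i⌋ : ℤ) : ℝ) * v i.castSucc j.castSucc := by
        rw [Finset.mul_sum, ← Finset.sum_add_distrib, ← Finset.sum_add_distrib]
        refine Finset.sum_congr rfl fun i _ => ?_
        rw [Int.fract]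
        push_cast
        ring
      rw [expand, h3, ← h4]
      push_cast at h2 ⊢
      linarith [h2]
  -- LB : each orbit time comes from some k
  have LB : ∀ (x : Fin s → ℝ) (n : ℕ),
      ModMem s (x + (n:ℝ) • α) (specialRegionOf s v) → ∃ k : ℤ, F x k = n := by
    intro x n hmem
    obtain ⟨m, hm⟩ := hmem
    rw [memA] at hm
    obtain ⟨t, ht, hteq⟩ := hm
    have hlam : ((n:ℝ) • alphaExt s α + Fin.snoc (fun i => (m i : ℝ)) 0) ∈ zSpanSet v := by
      rw [hS3]
      refine ⟨(n:ℤ), m, ?_⟩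
      norm_num
    obtain ⟨cc, hcc⟩ := hlam
    refine ⟨cc (Fin.last s), ?_⟩
    have hteq2 : (fun i => u x i + (cc i.castSucc : ℝ)
        + (cc (Fin.last s) : ℝ) * w i) = t := by
      apply huniq
      funext j
      rw [hvmj, hvmj]
      have h2 := congrFun hcc (Fin.castSucc j)
      simp only [Pi.add_apply, Pi.smul_apply, smul_eq_mul, alphaExt, Fin.snoc_castSucc,
        Finset.sum_apply] at h2
      rw [Fin.sum_univ_castSucc] at h2
      have h3 := congrFun (hu x) j
      rw [hvmj] at h3
      have h4 := congrFun hgw j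
      simp only [phiProj] at h4
      rw [hvmj] at h4
      have h5 := congrFun hteq j
      simp only [Pi.add_apply, Pi.smul_apply, smul_eq_mul, intVec] at h5
      rw [hvmj] at h5
      have expand : ∑ i : Fin s, (u x i + (cc i.castSucc : ℝ) + (cc (Fin.last s) : ℝ) * w i)
            * v i.castSucc j.castSucc
          = (∑ i : Fin s, u x i * v i.castSucc j.castSucc)
            + (∑ i : Fin s, (cc i.castSucc : ℝ) * v i.castSucc j.castSucc)
            + (cc (Fin.last s) : ℝ) * ∑ i : Fin s, w i * v i.castSucc j.castSucc := by
        rw [Finset.mul_sum, ← Finset.sum_add_distrib, ← Finset.sum_add_distrib]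
        exact Finset.sum_congr rfl fun i _ => by ring
      rw [expand, h3, ← h4]
      linarith [h2, h5]
    have hfloor : ∀ i : Fin s, (-⌊u x i + ((cc (Fin.last s)):ℝ) * w i⌋ : ℤ) = cc i.castSucc := by
      intro i
      have h6 := congrFun hteq2 i
      have h7 : u x i + (cc (Fin.last s):ℝ) * w i = t i - (cc i.castSucc:ℝ) := by
        linarith [h6]
      rw [h7, Int.floor_sub_intCast]
      have h8 : ⌊t i⌋ = 0 := by
        rw [Int.floor_eq_zero_iff, Set.mem_Ico]
        exact ⟨(ht i).1, (ht i).2⟩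
      rw [h8]
      ring
    rw [hFdef]
    have h9 := congrFun hcc (Fin.last s)
    simp only [Pi.add_apply, Pi.smul_apply, smul_eq_mul, alphaExt, Fin.snoc_last,
      Finset.sum_apply] at h9
    rw [Fin.sum_univ_castSucc] at h9
    have h10 : ∑ i : Fin s, ((-⌊u x i + ((cc (Fin.last s)):ℝ) * w i⌋ : ℤ):ℝ)
          * v i.castSucc (Fin.last s)
        = ∑ i : Fin s, ((cc i.castSucc):ℝ) * v i.castSucc (Fin.last s) :=
      Finset.sum_congr rfl fun i _ => by rw [hfloor i]
    rw [h10]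
    push_cast at h9 ⊢
    linarith [h9]
  -- LC : strict growth
  have LC : ∀ (x : Fin s → ℝ) (k : ℤ), F x k + 1 ≤ F x (k+1) := by
    intro x k
    obtain ⟨d, hddef⟩ : ∃ d : Fin s → ℤ, ∀ i,
        d i = ⌊u x i + ((k+1:ℤ):ℝ) * w i⌋ - ⌊u x i + (k:ℝ) * w i⌋ := ⟨_, fun _ => rfl⟩
    have hd01 : ∀ i, d i = 0 ∨ d i = 1 := by
      intro i
      have hle : ⌊u x i + (k:ℝ) * w i⌋ ≤ ⌊u x i + ((k+1:ℤ):ℝ) * w i⌋ :=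
        Int.floor_le_floor (by push_cast; nlinarith [(hw i).1])
      have hlt : ⌊u x i + ((k+1:ℤ):ℝ) * w i⌋ ≤ ⌊u x i + (k:ℝ) * w i⌋ + 1 := by
        rw [show ⌊u x i + (k:ℝ) * w i⌋ + 1 = ⌊(u x i + (k:ℝ) * w i) + ((1:ℤ):ℝ)⌋ from
          (Int.floor_add_intCast _ _).symm]
        exact Int.floor_le_floor (by push_cast; nlinarith [(hw i).2])
      rw [hddef]
      omega
    have hdiff : F x (k+1) - F x k
        = v (Fin.last s) (Fin.last s) - ∑ i, (d i:ℝ) * v i.castSucc (Fin.last s) := by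
      rw [hFdef, hFdef]
      have e2 : (∑ i, ((-⌊u x i + ((k+1:ℤ):ℝ) * w i⌋ : ℤ):ℝ) * v i.castSucc (Fin.last s))
          - (∑ i, ((-⌊u x i + (k:ℝ) * w i⌋ : ℤ):ℝ) * v i.castSucc (Fin.last s))
          = -∑ i, (d i:ℝ) * v i.castSucc (Fin.last s) := by
        rw [← Finset.sum_sub_distrib, ← Finset.sum_neg_distrib]
        refine Finset.sum_congr rfl fun i _ => ?_
        rw [← sub_mul]
        rw [show ((-⌊u x i + ((k+1:ℤ):ℝ) * w i⌋ : ℤ):ℝ) - ((-⌊u x i + (k:ℝ) * w i⌋ : ℤ):ℝ)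
            = -(d i:ℝ) from by rw [hddef]; push_cast; ring]
        ring
      push_cast at e2 ⊢
      linarith [e2]
    have hsf : ∑ i ∈ Finset.univ.filter (fun i => d i = 1), v i.castSucc (Fin.last s)
        = ∑ i, (d i:ℝ) * v i.castSucc (Fin.last s) := by
      rw [Finset.sum_filter]
      refine Finset.sum_congr rfl fun i _ => ?_
      rcases hd01 i with h | h <;> simp [h]
    have hpos := hS4 (Finset.univ.filter (fun i => d i = 1))
    rw [hsf] at hpos
    obtain ⟨n₁, hn₁, -⟩ := LA x k
    obtain ⟨n₂, hn₂, -⟩ := LA x (k+1)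
    have hlt : n₁ < n₂ := by
      have : (n₁:ℝ) < (n₂:ℝ) := by rw [hn₁, hn₂]; linarith [hdiff, hpos]
      exact_mod_cast this
    have h11 : ((n₁:ℝ)) + 1 ≤ (n₂:ℝ) := by
      have : n₁ + 1 ≤ n₂ := hlt
      exact_mod_cast this
    linarith [hn₁, hn₂, h11]
  -- LD : iterated growth
  have LD : ∀ (x : Fin s → ℝ) (j : ℕ) (k : ℤ), F x k + (j:ℝ) ≤ F x (k + (j:ℤ)) := by
    intro x j
    induction j with
    | zero => intro k; simp
    | succ j ih =>
      intro k
      have h1 := ih k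
      have h2 := LC x (k + (j:ℤ))
      have : (k + ((j:ℕ)+1:ℕ) : ℤ) = (k + (j:ℤ)) + 1 := by push_cast; ring
      rw [this]
      push_cast
      push_cast at h1
      linarith
  -- R
  obtain ⟨R, hRdef⟩ : ∃ R : ℝ, R = ∑ i : Fin s, |v i.castSucc (Fin.last s)| := ⟨_, rfl⟩
  have hR : 0 ≤ R := by
    rw [hRdef]; exact Finset.sum_nonneg fun i _ => abs_nonneg _
  -- LE : linear approximation
  have LE : ∀ (x : Fin s → ℝ) (k : ℤ), |F x k - F x 0 - (k:ℝ) * γ| ≤ R := by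
    intro x k
    have hfk : ∀ k' : ℤ, F x k'
        = (∑ i, Int.fract (u x i + (k':ℝ) * w i) * v i.castSucc (Fin.last s))
          - (∑ i, u x i * v i.castSucc (Fin.last s)) + (k':ℝ) * γ := by
      intro k'
      rw [hFdef, hγdef]
      rw [show (∑ i, ((-⌊u x i + (k':ℝ) * w i⌋ : ℤ) : ℝ) * v i.castSucc (Fin.last s))
          = ∑ i, (Int.fract (u x i + (k':ℝ) * w i) - u x i - (k':ℝ) * w i)
              * v i.castSucc (Fin.last s) from
        Finset.sum_congr rfl fun i _ => by rw [Int.fract]; push_cast; ring]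
      rw [show ∑ i, (Int.fract (u x i + (k':ℝ) * w i) - u x i - (k':ℝ) * w i)
              * v i.castSucc (Fin.last s)
          = (∑ i, Int.fract (u x i + (k':ℝ) * w i) * v i.castSucc (Fin.last s))
            - (∑ i, u x i * v i.castSucc (Fin.last s))
            - (k':ℝ) * ∑ i, w i * v i.castSucc (Fin.last s) from by
        rw [Finset.mul_sum, ← Finset.sum_sub_distrib, ← Finset.sum_sub_distrib]
        exact Finset.sum_congr rfl fun i _ => by ring]
      ring
    have key : F x k - F x 0 - (k:ℝ) * γ
        = (∑ i, Int.fract (u x i + (k:ℝ) * w i) * v i.castSucc (Fin.last s))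
          - (∑ i, Int.fract (u x i + ((0:ℤ):ℝ) * w i) * v i.castSucc (Fin.last s)) := by
      rw [hfk k, hfk 0]
      push_cast
      ring
    rw [key, ← Finset.sum_sub_distrib, hRdef]
    refine (Finset.abs_sum_le_sum_abs _ _).trans (Finset.sum_le_sum fun i _ => ?_)
    rw [← sub_mul, abs_mul]
    have hb : |Int.fract (u x i + (k:ℝ) * w i) - Int.fract (u x i + ((0:ℤ):ℝ) * w i)| ≤ 1 := by
      rw [abs_le]
      constructor <;>
        nlinarith [Int.fract_nonneg (u x i + (k:ℝ) * w i),
          Int.fract_lt_one (u x i + (k:ℝ) * w i),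
          Int.fract_nonneg (u x i + ((0:ℤ):ℝ) * w i),
          Int.fract_lt_one (u x i + ((0:ℤ):ℝ) * w i)]
    calc |Int.fract (u x i + (k:ℝ) * w i) - Int.fract (u x i + ((0:ℤ):ℝ) * w i)|
          * |v i.castSucc (Fin.last s)|
        ≤ 1 * |v i.castSucc (Fin.last s)| :=
          mul_le_mul_of_nonneg_right hb (abs_nonneg _)
      _ = |v i.castSucc (Fin.last s)| := one_mul _
  -- positivity of γ
  have hγpos : 0 < γ := by
    by_contra hcon
    push_neg at hcon
    obtain ⟨j, hj⟩ := exists_nat_gt R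
    have h1 := LD 0 j 0
    have h2 := LE 0 ((0:ℤ) + (j:ℤ))
    rw [abs_le] at h2
    have h3 : (((0:ℤ) + (j:ℤ) : ℤ):ℝ) * γ ≤ 0 := by
      apply mul_nonpos_of_nonneg_of_nonpos _ hcon
      push_cast; positivity
    push_cast at h1 h2 h3
    linarith
  -- volume computation
  have hvol : (volume (specialRegionOf s v)).toReal = 1/γ := by
    have himg : specialRegionOf s v
        = (Matrix.toLin' M.transpose) '' (Set.univ.pi fun _ : Fin s => Set.Ico (0:ℝ) 1) := by
      ext y
      rw [memA y]
      constructor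
      · rintro ⟨t, ht, rfl⟩
        refine ⟨t, fun i _ => Set.mem_Ico.2 ⟨(ht i).1, (ht i).2⟩, ?_⟩
        rw [Matrix.toLin'_apply]
        funext j
        simp only [Matrix.mulVec, Matrix.vecMul, dotProduct, Matrix.transpose_apply]
        exact Finset.sum_congr rfl fun i _ => mul_comm _ _
      · rintro ⟨t, ht, rfl⟩
        refine ⟨t, fun i => ?_, ?_⟩
        · have h1 := ht i (Set.mem_univ i)
          rw [Set.mem_Ico] at h1
          exact h1
        · rw [Matrix.toLin'_apply]
          funext j
          simp only [Matrix.mulVec, Matrix.vecMul, dotProduct, Matrix.transpose_apply]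
          exact Finset.sum_congr rfl fun i _ => mul_comm _ _
    rw [himg, Measure.addHaar_image_linearMap, LinearMap.det_toLin', Matrix.det_transpose]
    rw [volume_pi_pi]
    simp only [Real.volume_Ico, sub_zero, ENNReal.ofReal_one, Finset.prod_const_one, mul_one]
    rw [ENNReal.toReal_ofReal (abs_nonneg _)]
    have hone : γ * |M.det| = 1 := by
      rw [← abs_of_pos hγpos, ← abs_mul]
      exact habs
    rw [eq_div_iff (ne_of_gt hγpos)]
    linarith [hone]
  -- strict monotonicity
  have hmono : ∀ (x : Fin s → ℝ) (k k' : ℤ), k < k' → F x k < F x k' := by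
    intro x k k' hkk
    have h0 : ((k' - k).toNat : ℤ) = k' - k := Int.toNat_of_nonneg (by omega)
    have h1 := LD x (k' - k).toNat k
    rw [h0] at h1
    have h2 : (1:ℝ) ≤ ((k' - k).toNat : ℝ) := by
      have : 1 ≤ (k' - k).toNat := by omega
      exact_mod_cast this
    have : k + (k' - k) = k' := by ring
    rw [this] at h1
    linarith
  -- MAIN ESTIMATE
  refine ⟨2 * R / γ + 2, ?_⟩
  intro x N
  choose nF hnF1 hnF2 using LA x
  obtain ⟨S, hSdef⟩ : ∃ S : Finset ℕ, S = (Finset.range N).filter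
      (fun n => ModMem s (x + n • α) (specialRegionOf s v)) := ⟨_, rfl⟩
  have hsmul : ∀ n : ℕ, (n • α : Fin s → ℝ) = (n:ℝ) • α := by
    intro n
    funext i
    simp [nsmul_eq_mul]
  have hsum : (∑ n ∈ Finset.range N, Set.indicator {y | ModMem s y (specialRegionOf s v)}
      (fun _ => (1:ℝ)) (x + n • α)) = S.card := by
    rw [hSdef, ← Finset.sum_boole]
    refine Finset.sum_congr rfl fun n _ => ?_
    by_cases hc : ModMem s (x + n • α) (specialRegionOf s v)
    · simp [Set.indicator_apply, hc]
    · simp [Set.indicator_apply, hc]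
  obtain ⟨a, hadef⟩ : ∃ a : ℤ, a = ⌈(-(F x 0) - R)/γ⌉ := ⟨_, rfl⟩
  obtain ⟨b, hbdef⟩ : ∃ b : ℤ, b = ⌈(((N:ℕ):ℝ) - F x 0 + R)/γ⌉ := ⟨_, rfl⟩
  obtain ⟨K, hKdef⟩ : ∃ K : Finset ℤ, K = (Finset.Ico a (b+1)).filter
      (fun k => 0 ≤ F x k ∧ F x k < ((N:ℕ):ℝ)) := ⟨_, rfl⟩
  have hPK : ∀ k : ℤ, 0 ≤ F x k → F x k < ((N:ℕ):ℝ) → (a ≤ k ∧ k < b + 1) := by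
    intro k h0 h1
    have h2 := LE x k
    rw [abs_le] at h2
    constructor
    · rw [hadef, Int.ceil_le, div_le_iff₀ hγpos]
      linarith [h2.2]
    · have h3 : (k:ℝ) < (((N:ℕ):ℝ) - F x 0 + R)/γ := by
        rw [lt_div_iff₀ hγpos]
        linarith [h2.1]
      have h4 : (k:ℝ) ≤ (b:ℝ) := by
        rw [hbdef]
        exact le_trans h3.le (Int.le_ceil _)
      have h5 : k ≤ b := by exact_mod_cast h4
      omega
  have hKnn : ∀ k, k ∈ K → 0 ≤ nF k ∧ nF k < (N:ℤ) := by
    intro k hk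
    rw [hKdef] at hk
    obtain ⟨-, h0, h1⟩ := Finset.mem_filter.1 hk
    constructor
    · have h2 : (0:ℝ) ≤ (nF k:ℝ) := by rw [hnF1 k]; exact h0
      exact_mod_cast h2
    · have h2 : ((nF k):ℝ) < ((N:ℕ):ℝ) := by rw [hnF1 k]; exact h1
      exact_mod_cast h2
  have hcard : K.card = S.card := by
    refine Finset.card_bij (fun k _ => (nF k).toNat) ?_ ?_ ?_
    · intro k hk
      obtain ⟨e0, e1⟩ := hKnn k hk
      rw [hSdef, Finset.mem_filter, Finset.mem_range]
      refine ⟨by show (nF k).toNat < N; omega, ?_⟩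
      have hcast : ((nF k).toNat : ℝ) = ((nF k):ℝ) := by
        have := Int.toNat_of_nonneg e0
        exact_mod_cast congrArg (fun z : ℤ => (z:ℝ)) this
      rw [hsmul ((nF k).toNat), hcast]
      exact hnF2 k
    · intro k₁ hk₁ k₂ hk₂ heq
      have e₁ := hKnn k₁ hk₁
      have e₂ := hKnn k₂ hk₂
      have heq' : (nF k₁).toNat = (nF k₂).toNat := heq
      have h1 : nF k₁ = nF k₂ := by omega
      have h2 : F x k₁ = F x k₂ := by rw [← hnF1 k₁, ← hnF1 k₂, h1]
      by_contra hne
      rcases lt_or_gt_of_ne hne with h | h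
      · exact absurd h2 (ne_of_lt (hmono x _ _ h))
      · exact absurd h2.symm (ne_of_lt (hmono x _ _ h))
    · intro n hn
      rw [hSdef, Finset.mem_filter, Finset.mem_range] at hn
      obtain ⟨hnN, hmm⟩ := hn
      rw [hsmul n] at hmm
      obtain ⟨k, hk⟩ := LB x n hmm
      have h0 : 0 ≤ F x k := by rw [hk]; exact Nat.cast_nonneg n
      have h1 : F x k < ((N:ℕ):ℝ) := by rw [hk]; exact_mod_cast hnN
      refine ⟨k, ?_, ?_⟩
      · rw [hKdef, Finset.mem_filter, Finset.mem_Ico]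
        exact ⟨hPK k h0 h1, h0, h1⟩
      · have e1 : (nF k : ℝ) = (n:ℝ) := by rw [hnF1 k, hk]
        have e2 : nF k = (n:ℤ) := by exact_mod_cast e1
        show (nF k).toNat = n
        omega
  have hub : (S.card : ℝ) ≤ ((N:ℕ):ℝ)/γ + (2*R/γ + 2) := by
    rw [← hcard]
    have h1 : K.card ≤ (Finset.Ico a (b+1)).card := by
      rw [hKdef]
      exact Finset.card_filter_le _ _
    rw [Int.card_Ico] at h1
    have h2 : (K.card:ℝ) ≤ ((b + 1 - a).toNat : ℝ) := by exact_mod_cast h1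
    have hsplit : ((((N:ℕ):ℝ) - F x 0 + R)/γ + 1) - ((-(F x 0) - R)/γ - 0)
        = (((N:ℕ):ℝ) + 2*R)/γ + 1 := by
      field_simp
      ring
    have hdiv : (((N:ℕ):ℝ) + 2*R)/γ = ((N:ℕ):ℝ)/γ + 2*R/γ := add_div _ _ _
    rcases le_or_gt (b + 1 - a) 0 with hba0 | hba0
    · rw [Int.toNat_of_nonpos hba0] at h2
      push_cast at h2
      have hpos2 : (0:ℝ) ≤ ((N:ℕ):ℝ)/γ + (2*R/γ + 2) := by positivity
      linarith
    · have h3 : ((b + 1 - a).toNat : ℝ) = (b:ℝ) + 1 - a := by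
        have := Int.toNat_of_nonneg hba0.le
        have h4 := congrArg (fun z : ℤ => (z:ℝ)) this
        push_cast at h4
        linarith [h4]
      have hbb : (b:ℝ) < ((((N:ℕ):ℝ) - F x 0 + R)/γ) + 1 := by
        rw [hbdef]
        exact Int.ceil_lt_add_one _
      have haa : (-(F x 0) - R)/γ ≤ (a:ℝ) := by
        rw [hadef]
        exact Int.le_ceil _
      rw [h3] at h2
      linarith
  have hlb : ((N:ℕ):ℝ)/γ - (2*R/γ + 2) ≤ (S.card:ℝ) := by
    rw [← hcard]
    obtain ⟨a', hadef'⟩ : ∃ a' : ℤ, a' = ⌈(R - F x 0)/γ⌉ := ⟨_, rfl⟩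
    obtain ⟨b', hbdef'⟩ : ∃ b' : ℤ, b' = ⌈(((N:ℕ):ℝ) - F x 0 - R)/γ⌉ := ⟨_, rfl⟩
    have hsub : Finset.Ico a' b' ⊆ K := by
      intro k hk
      rw [Finset.mem_Ico] at hk
      have hk1 : (R - F x 0)/γ ≤ (k:ℝ) := by
        have t1 : (R - F x 0)/γ ≤ (a':ℝ) := by rw [hadef']; exact Int.le_ceil _
        have t2 : (a':ℝ) ≤ (k:ℝ) := by exact_mod_cast hk.1
        linarith
      have hγk1 : R - F x 0 ≤ (k:ℝ)*γ := by
        rw [div_le_iff₀ hγpos] at hk1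
        exact hk1
      have hk2 : (k:ℝ) < (((N:ℕ):ℝ) - F x 0 - R)/γ := by
        have t1 : (k:ℝ) ≤ (b':ℝ) - 1 := by
          have : k ≤ b' - 1 := by omega
          have t2 : (k:ℝ) ≤ ((b' - 1 : ℤ):ℝ) := by exact_mod_cast this
          push_cast at t2
          linarith
        have hceil := Int.ceil_lt_add_one ((((N:ℕ):ℝ) - F x 0 - R)/γ)
        rw [← hbdef'] at hceil
        linarith
      have hγk2 : (k:ℝ)*γ < ((N:ℕ):ℝ) - F x 0 - R := by
        rw [lt_div_iff₀ hγpos] at hk2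
        exact hk2
      have h2 := LE x k
      rw [abs_le] at h2
      have h0 : 0 ≤ F x k := by linarith [h2.1]
      have h1 : F x k < ((N:ℕ):ℝ) := by linarith [h2.2]
      rw [hKdef, Finset.mem_filter, Finset.mem_Ico]
      exact ⟨hPK k h0 h1, h0, h1⟩
    have hc1 : (Finset.Ico a' b').card ≤ K.card := Finset.card_le_card hsub
    rw [Int.card_Ico] at hc1
    have h6 : ((b' - a').toNat:ℝ) ≤ (K.card:ℝ) := by exact_mod_cast hc1
    have t1 : (((N:ℕ):ℝ) - F x 0 - R)/γ ≤ (b':ℝ) := by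
      rw [hbdef']
      exact Int.le_ceil _
    have t2 : (a':ℝ) < (R - F x 0)/γ + 1 := by
      rw [hadef']
      exact Int.ceil_lt_add_one _
    have t3 : ((b' - a' : ℤ):ℝ) ≤ ((b' - a').toNat : ℝ) := by
      exact_mod_cast Int.self_le_toNat _
    push_cast at t3
    have hsplit : (((N:ℕ):ℝ) - F x 0 - R)/γ - ((R - F x 0)/γ + 1)
        = (((N:ℕ):ℝ) - 2*R)/γ - 1 := by
      field_simp
      ring
    have h5 : (((N:ℕ):ℝ)-2*R)/γ = ((N:ℕ):ℝ)/γ - 2*R/γ := by rw [sub_div]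
    linarith
  rw [hsum, hvol]
  rw [show ((N:ℕ):ℝ) * (1/γ) = ((N:ℕ):ℝ)/γ from by ring]
  rw [abs_le]
  constructor
  · linarith
  · linarith


end
end

section
/- Let α ∈ ℝ^s be totally irrational, Λ the lattice generated by (α,1), e_1, …, e_s, and let v_1, …, v_{s+1} be a ℤ-basis of Λ defining a special region A = φ(P(v_1, …, v_s)) (satisfying (S1)–(S4)). Then for each k ∈ ℤ, the set Λ ∩ H_k ∩ φ^{-1}(A) contains exactly one point, where H_k = span(v_1, …, v_s) + k v_{s+1} and φ is the projection to the first s coordinates. -/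
open MeasureTheory

noncomputable section

/-- For a special basis `v` of `Λ` with special region
`A = φ(P(v_1,…,v_s))`, each set `Λ ∩ H_k ∩ φ^{-1}(A)` contains exactly one point. -/
theorem unique_lattice_point_in_each_slab
    (s : ℕ) (α : Fin s → ℝ) (hα : TotallyIrrational s α)
    (v : Fin (s+1) → (Fin (s+1) → ℝ)) (hv : IsSpecialBasis s α v) :
    ∀ k : ℤ, ∃! x : Fin (s+1) → ℝ,
      x ∈ Lam s α ∧ x ∈ Hplane s v k ∧ phiProj s x ∈ specialRegionOf s v := by
  obtain ⟨hS2, hspan, hS4⟩ := hv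
  -- Step 1: each `v j` lies in the lattice, so decompose it.
  have hvLam : ∀ j, v j ∈ Lam s α := by
    intro j
    rw [← hspan]
    refine ⟨Pi.single j 1, ?_⟩
    rw [Finset.sum_eq_single j]
    · simp
    · intro b _ hb; simp [Pi.single_apply, hb]
    · simp
  choose n a hna using hvLam
  -- coordinates of `v j`
  have hvcs : ∀ j p, v j (Fin.castSucc p) = (n j : ℝ) * α p + (a j p : ℝ) := by
    intro j p
    rw [hna j]
    simp only [Pi.add_apply, Pi.smul_apply, smul_eq_mul, alphaExt, Fin.snoc_castSucc]
  have hvlast : ∀ j, v j (Fin.last s) = (n j : ℝ) := by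
    intro j
    rw [hna j]
    simp only [Pi.add_apply, Pi.smul_apply, smul_eq_mul, alphaExt, Fin.snoc_last, mul_one,
      add_zero]
  -- coordinates of a real linear combination of the `v j`
  have hco_last : ∀ y : Fin (s+1) → ℝ,
      (∑ j, y j • v j) (Fin.last s) = ∑ j, y j * (n j : ℝ) := by
    intro y
    rw [Finset.sum_apply]
    exact Finset.sum_congr rfl fun j _ => by rw [Pi.smul_apply, hvlast j, smul_eq_mul]
  have hco_cs : ∀ (y : Fin (s+1) → ℝ) (p : Fin s),
      (∑ j, y j • v j) (Fin.castSucc p)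
        = (∑ j, y j * (a j p : ℝ)) + (∑ j, y j * (n j : ℝ)) * α p := by
    intro y p
    have h1 : (∑ j, y j • v j) (Fin.castSucc p)
        = ∑ j, (y j * (a j p : ℝ) + y j * (n j : ℝ) * α p) := by
      rw [Finset.sum_apply]
      refine Finset.sum_congr rfl fun j _ => ?_
      rw [Pi.smul_apply, hvcs j p, smul_eq_mul]
      ring
    rw [h1, Finset.sum_add_distrib, Finset.sum_mul]
  -- the integer matrix of the basis, and its real version
  set Bi : Matrix (Fin (s+1)) (Fin (s+1)) ℤ :=
    Matrix.of fun r j => (Fin.snoc (a j) (n j) : Fin (s+1) → ℤ) r with hBi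
  set B : Matrix (Fin (s+1)) (Fin (s+1)) ℝ :=
    Matrix.of fun r j => ((Bi r j : ℤ) : ℝ) with hBdef
  have hB_cs : ∀ (p : Fin s) j, B (Fin.castSucc p) j = (a j p : ℝ) := by
    intro p j; simp [hBdef, hBi]
  have hB_last : ∀ j, B (Fin.last s) j = (n j : ℝ) := by
    intro j; simp [hBdef, hBi]
  -- `B` is invertible: the generators of `Λ` are integer combinations of `v`
  have hwmem : alphaExt s α ∈ zSpanSet v := by
    rw [hspan]
    refine ⟨1, fun _ => 0, ?_⟩
    funext r
    induction r using Fin.lastCases with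
    | last => simp [alphaExt]
    | cast i => simp [alphaExt]
  have hemem : ∀ i : Fin s,
      (Fin.snoc (fun m => ((Pi.single i 1 : Fin s → ℤ) m : ℝ)) 0 : Fin (s+1) → ℝ)
        ∈ zSpanSet v := by
    intro i
    rw [hspan]
    exact ⟨0, Pi.single i 1, by simp⟩
  obtain ⟨cw, hcw⟩ := hwmem
  choose ce hce using hemem
  -- coefficient identities for `cw`
  have hwn : (∑ j, (cw j : ℝ) * (n j : ℝ)) = 1 := by
    have h := congrFun hcw (Fin.last s)
    rw [hco_last] at h
    simp only [alphaExt, Fin.snoc_last] at h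
    exact h.symm
  have hwa : ∀ p, (∑ j, (cw j : ℝ) * (a j p : ℝ)) = 0 := by
    intro p
    have h := congrFun hcw (Fin.castSucc p)
    rw [hco_cs, hwn, one_mul] at h
    simp only [alphaExt, Fin.snoc_castSucc] at h
    linarith
  -- coefficient identities for `ce i`
  have hen : ∀ i, (∑ j, (ce i j : ℝ) * (n j : ℝ)) = 0 := by
    intro i
    have h := congrFun (hce i) (Fin.last s)
    rw [hco_last] at h
    simp only [Fin.snoc_last] at h
    exact h.symm
  have hea : ∀ i p, (∑ j, (ce i j : ℝ) * (a j p : ℝ)) = if p = i then 1 else 0 := by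
    intro i p
    have h := congrFun (hce i) (Fin.castSucc p)
    rw [hco_cs, hen i, zero_mul, add_zero] at h
    simp only [Fin.snoc_castSucc, Pi.single_apply] at h
    rw [← h]
    by_cases hpi : p = i <;> simp [hpi]
  -- the right inverse of `B`
  set C : Matrix (Fin (s+1)) (Fin (s+1)) ℝ :=
    Matrix.of fun j k => ((Fin.lastCases cw ce k : Fin (s+1) → ℤ) j : ℝ) with hCdef
  have hBC : B * C = 1 := by
    ext r k
    have hentry : (B * C) r k
        = ∑ j, B r j * ((Fin.lastCases cw ce k : Fin (s+1) → ℤ) j : ℝ) := by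
      simp [Matrix.mul_apply, hCdef]
    induction k using Fin.lastCases with
    | last =>
      rw [hentry]
      simp only [Fin.lastCases_last]
      induction r using Fin.lastCases with
      | last =>
        rw [Matrix.one_apply_eq, ← hwn]
        exact Finset.sum_congr rfl fun j _ => by rw [hB_last, mul_comm]
      | cast p =>
        rw [Matrix.one_apply_ne (Fin.castSucc_lt_last p).ne, ← hwa p]
        exact Finset.sum_congr rfl fun j _ => by rw [hB_cs, mul_comm]
    | cast i =>
      rw [hentry]
      simp only [Fin.lastCases_castSucc]
      induction r using Fin.lastCases with
      | last =>
        rw [Matrix.one_apply_ne (Fin.castSucc_lt_last i).ne', ← hen i]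
        exact Finset.sum_congr rfl fun j _ => by rw [hB_last, mul_comm]
      | cast p =>
        have hone : (1 : Matrix (Fin (s+1)) (Fin (s+1)) ℝ) (Fin.castSucc p) (Fin.castSucc i)
            = if p = i then 1 else 0 := by
          by_cases h : p = i
          · subst h; simp
          · rw [Matrix.one_apply_ne (fun hh => h (Fin.castSucc_injective s hh)), if_neg h]
        rw [hone, ← hea i p]
        exact Finset.sum_congr rfl fun j _ => by rw [hB_cs, mul_comm]
  have hdetB : B.det ≠ 0 := by
    intro h
    have h2 := congrArg Matrix.det hBC
    rw [Matrix.det_mul, h, zero_mul, Matrix.det_one] at h2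
    exact zero_ne_one h2
  have hBinj : ∀ y : Fin (s+1) → ℝ, B.mulVec y = 0 → y = 0 :=
    fun y hy => Matrix.eq_zero_of_mulVec_eq_zero hdetB hy
  -- linear independence of `v`
  have hvind : ∀ y : Fin (s+1) → ℝ, ∑ j, y j • v j = 0 → y = 0 := by
    intro y hy
    have hl : ∑ j, y j * (n j : ℝ) = 0 := by
      rw [← hco_last y, hy, Pi.zero_apply]
    have hc : ∀ p, ∑ j, y j * (a j p : ℝ) = 0 := by
      intro p
      have h := hco_cs y p
      rw [hy, hl, zero_mul, add_zero, Pi.zero_apply] at h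
      exact h.symm
    apply hBinj
    funext r
    induction r using Fin.lastCases with
    | last =>
      show ∑ j, B (Fin.last s) j * y j = 0
      rw [← hl]
      exact Finset.sum_congr rfl fun j _ => by rw [hB_last, mul_comm]
    | cast p =>
      show ∑ j, B (Fin.castSucc p) j * y j = 0
      rw [← hc p]
      exact Finset.sum_congr rfl fun j _ => by rw [hB_cs, mul_comm]
  -- linear independence of the projections `u i = φ(v i)`
  have hu : ∀ c : Fin s → ℝ,
      (∀ p, ∑ i, c i * v (Fin.castSucc i) (Fin.castSucc p) = 0) → c = 0 := by
    intro c hc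
    by_contra hc0
    set t : ℝ := ∑ i, c i * (n (Fin.castSucc i) : ℝ) with ht
    have hap : ∀ p, ∑ i, c i * (a (Fin.castSucc i) p : ℝ) = -(t * α p) := by
      intro p
      have h := hc p
      have hexp : ∀ i : Fin s, c i * v (Fin.castSucc i) (Fin.castSucc p)
          = c i * (a (Fin.castSucc i) p : ℝ) + (c i * (n (Fin.castSucc i) : ℝ)) * α p := by
        intro i
        rw [hvcs (Fin.castSucc i) p]
        ring
      rw [Finset.sum_congr rfl (fun i _ => hexp i), Finset.sum_add_distrib,
        ← Finset.sum_mul, ← ht] at h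
      linarith
    -- the singular matrix
    set M : Matrix (Fin (s+1)) (Fin (s+1)) ℝ :=
      Matrix.of fun r j =>
        Fin.lastCases ((Fin.snoc (fun p => -α p) 1 : Fin (s+1) → ℝ) r)
          (fun i => B r (Fin.castSucc i)) j with hM
    have hMlastcol : ∀ r, M r (Fin.last s) = (Fin.snoc (fun p => -α p) 1 : Fin (s+1) → ℝ) r := by
      intro r; simp [hM]
    have hMcscol : ∀ r i, M r (Fin.castSucc i) = B r (Fin.castSucc i) := by
      intro r i; simp [hM]
    have hdetM : M.det = 0 := by
      rw [← Matrix.exists_mulVec_eq_zero_iff]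
      refine ⟨(Fin.snoc c (-t) : Fin (s+1) → ℝ), ?_, ?_⟩
      · intro h
        apply hc0
        funext i
        have h2 := congrFun h (Fin.castSucc i)
        simpa using h2
      · funext r
        simp only [Matrix.mulVec, dotProduct, Pi.zero_apply]
        rw [Fin.sum_univ_castSucc]
        simp only [Fin.snoc_castSucc, Fin.snoc_last]
        induction r using Fin.lastCases with
        | last =>
          simp only [hMlastcol, hMcscol, Fin.snoc_last]
          have h3 : ∑ i, B (Fin.last s) (Fin.castSucc i) * c i = t := by
            rw [ht]
            exact Finset.sum_congr rfl fun i _ => by rw [hB_last, mul_comm]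
          rw [h3]; ring
        | cast p =>
          simp only [hMlastcol, hMcscol, Fin.snoc_castSucc]
          have h3 : ∑ i, B (Fin.castSucc p) (Fin.castSucc i) * c i = -(t * α p) := by
            rw [← hap p]
            exact Finset.sum_congr rfl fun i _ => by rw [hB_cs, mul_comm]
          rw [h3]; ring
    -- cofactor expansion along the last column
    set z : Fin (s+1) → ℤ := fun r =>
      (-1) ^ ((r : ℕ) + s) * (Bi.submatrix r.succAbove Fin.castSucc).det with hz
    have hzc : ∀ r : Fin (s+1),
        ((z r : ℤ) : ℝ) = (-1 : ℝ) ^ ((r : ℕ) + s) * ((Bi.submatrix r.succAbove Fin.castSucc).det : ℝ) := by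
      intro r; rw [hz]; push_cast; ring
    have hsubB : ∀ r : Fin (s+1),
        (B.submatrix r.succAbove (Fin.last s).succAbove).det
          = ((Bi.submatrix r.succAbove Fin.castSucc).det : ℝ) := by
      intro r
      rw [Fin.succAbove_last]
      have h4 : B.submatrix r.succAbove Fin.castSucc
          = ((Int.castRingHom ℝ).mapMatrix (Bi.submatrix r.succAbove Fin.castSucc)) := by
        ext p i
        simp [Matrix.submatrix_apply, hBdef]
      rw [h4, ← RingHom.map_det]
      rfl
    have hsubM : ∀ r : Fin (s+1),
        (M.submatrix r.succAbove (Fin.last s).succAbove).det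
          = ((Bi.submatrix r.succAbove Fin.castSucc).det : ℝ) := by
      intro r
      rw [← hsubB r, Fin.succAbove_last]
      congr 1
      ext p i
      simp only [Matrix.submatrix_apply]
      exact hMcscol _ i
    have hMexp : M.det = ∑ r, (z r : ℝ) * M r (Fin.last s) := by
      rw [Matrix.det_succ_column M (Fin.last s)]
      refine Finset.sum_congr rfl fun r _ => ?_
      rw [hsubM r, hzc r]
      simp only [Fin.val_last]
      ring
    have hBexp : B.det = ∑ r, (z r : ℝ) * B r (Fin.last s) := by
      rw [Matrix.det_succ_column B (Fin.last s)]
      refine Finset.sum_congr rfl fun r _ => ?_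
      rw [hsubB r, hzc r]
      simp only [Fin.val_last]
      ring
    -- total irrationality kills the cofactors
    have hz0 : ∀ r, z r = 0 := by
      have h0 : (∑ i, ((-(z (Fin.castSucc i)) : ℤ) : ℝ) * α i) + ((z (Fin.last s) : ℤ) : ℝ) = 0 := by
        have e1 := hMexp
        rw [hdetM, Fin.sum_univ_castSucc] at e1
        simp only [hMlastcol, Fin.snoc_castSucc, Fin.snoc_last, mul_one, mul_neg] at e1
        simp only [Int.cast_neg, neg_mul]
        exact e1.symm
      obtain ⟨hm, hn⟩ := hα _ _ h0
      intro r
      induction r using Fin.lastCases with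
      | last => exact hn
      | cast i =>
        have h5 := congrFun hm i
        simpa [neg_eq_zero] using h5
    apply hdetB
    rw [hBexp]
    refine Finset.sum_eq_zero fun r _ => ?_
    rw [hz0 r]
    simp
  -- extract `t⁰` from (S2)
  obtain ⟨p0, ⟨t0, ht0b, ht0e⟩, ht0p⟩ := hS2
  have ht0 : ∀ m, v (Fin.last s) (Fin.castSucc m)
      = ∑ i, t0 i * v (Fin.castSucc i) (Fin.castSucc m) := by
    intro m
    calc v (Fin.last s) (Fin.castSucc m) = phiProj s (v (Fin.last s)) m := rfl
      _ = phiProj s p0 m := (congrFun ht0p m).symm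
      _ = ∑ i, t0 i * v (Fin.castSucc i) (Fin.castSucc m) := by
          rw [ht0e]
          simp [phiProj, Finset.sum_apply]
  -- the main statement
  intro k
  set cint : Fin s → ℤ := fun i => -⌊(k : ℝ) * t0 i⌋ with hcint
  set x₀ : Fin (s+1) → ℝ :=
    (∑ i, ((cint i : ℝ)) • v (Fin.castSucc i)) + (k : ℝ) • v (Fin.last s) with hx₀
  -- the projected coordinates of any point of this form
  have hproj : ∀ (d : Fin s → ℝ) (m : Fin s),
      ((∑ i, d i • v (Fin.castSucc i)) + (k : ℝ) • v (Fin.last s)) (Fin.castSucc m)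
        = ∑ i, (d i + (k : ℝ) * t0 i) * v (Fin.castSucc i) (Fin.castSucc m) := by
    intro d m
    rw [Pi.add_apply, Pi.smul_apply, Finset.sum_apply, smul_eq_mul, ht0 m, Finset.mul_sum,
      ← Finset.sum_add_distrib]
    refine Finset.sum_congr rfl fun i _ => ?_
    rw [Pi.smul_apply, smul_eq_mul]
    ring
  have hfract : ∀ i, ((cint i : ℝ)) + (k : ℝ) * t0 i = Int.fract ((k : ℝ) * t0 i) := by
    intro i
    rw [hcint]
    have : Int.fract ((k : ℝ) * t0 i) = (k : ℝ) * t0 i - ⌊(k : ℝ) * t0 i⌋ := rfl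
    rw [this]
    push_cast
    ring
  refine ⟨x₀, ⟨?_, ?_, ?_⟩, ?_⟩
  · -- x₀ ∈ Lam
    rw [← hspan]
    refine ⟨Fin.snoc cint k, ?_⟩
    rw [Fin.sum_univ_castSucc]
    simp only [Fin.snoc_castSucc, Fin.snoc_last, hx₀]
  · -- x₀ ∈ Hplane
    exact ⟨fun i => (cint i : ℝ), rfl⟩
  · -- φ x₀ ∈ A
    refine ⟨∑ i, Int.fract ((k : ℝ) * t0 i) • v (Fin.castSucc i),
      ⟨fun i => Int.fract ((k : ℝ) * t0 i),
        fun i => ⟨Int.fract_nonneg _, Int.fract_lt_one _⟩, rfl⟩, ?_⟩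
    funext m
    show (∑ i, Int.fract ((k : ℝ) * t0 i) • v (Fin.castSucc i)) (Fin.castSucc m)
        = x₀ (Fin.castSucc m)
    rw [hx₀, hproj ]
    rw [Finset.sum_apply]
    refine Finset.sum_congr rfl fun i _ => ?_
    rw [Pi.smul_apply, smul_eq_mul, hfract i]
  · -- uniqueness
    rintro x ⟨hxl, hxh, hxa⟩
    rw [← hspan] at hxl
    obtain ⟨d, hd⟩ := hxl
    obtain ⟨c, hc⟩ := hxh
    -- identify coefficients
    have hdc : ∀ j, (d j : ℝ) = (Fin.snoc c ((k : ℝ)) : Fin (s+1) → ℝ) j := by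
      have hzero : ∑ j, ((d j : ℝ) - (Fin.snoc c ((k : ℝ)) : Fin (s+1) → ℝ) j) • v j = 0 := by
        simp only [sub_smul]
        rw [Finset.sum_sub_distrib, ← hd, Fin.sum_univ_castSucc]
        simp only [Fin.snoc_castSucc, Fin.snoc_last]
        rw [← hc]
        simp
      have h6 := hvind _ hzero
      intro j
      have h7 := congrFun h6 j
      simpa [sub_eq_zero] using h7
    have hdlast : (d (Fin.last s) : ℝ) = (k : ℝ) := by
      have h8 := hdc (Fin.last s); simpa using h8
    have hx : x = (∑ i, ((d (Fin.castSucc i) : ℝ)) • v (Fin.castSucc i))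
        + (k : ℝ) • v (Fin.last s) := by
      rw [hc, ← hdlast]
      congr 1
      refine Finset.sum_congr rfl fun i _ => ?_
      have h9 := hdc (Fin.castSucc i)
      rw [Fin.snoc_castSucc] at h9
      rw [h9]
    -- use membership in A
    obtain ⟨p1, ⟨t1, ht1b, ht1e⟩, ht1p⟩ := hxa
    have hxphi : ∀ m, phiProj s x m
        = ∑ i, ((d (Fin.castSucc i) : ℝ) + (k : ℝ) * t0 i)
            * v (Fin.castSucc i) (Fin.castSucc m) := by
      intro m
      show x (Fin.castSucc m) = _
      rw [hx]
      exact hproj _ m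
    have ht1phi : ∀ m, phiProj s x m
        = ∑ i, t1 i * v (Fin.castSucc i) (Fin.castSucc m) := by
      intro m
      rw [← ht1p, ht1e]
      simp [phiProj, Finset.sum_apply]
    have hteq : ∀ i, t1 i = (d (Fin.castSucc i) : ℝ) + (k : ℝ) * t0 i := by
      have hzero : (fun i => t1 i - ((d (Fin.castSucc i) : ℝ) + (k : ℝ) * t0 i)) = 0 := by
        apply hu
        intro p
        have h1 := hxphi p
        have h2 := ht1phi p
        calc ∑ i, (t1 i - ((d (Fin.castSucc i) : ℝ) + (k : ℝ) * t0 i))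
                * v (Fin.castSucc i) (Fin.castSucc p)
            = (∑ i, t1 i * v (Fin.castSucc i) (Fin.castSucc p))
              - ∑ i, ((d (Fin.castSucc i) : ℝ) + (k : ℝ) * t0 i)
                  * v (Fin.castSucc i) (Fin.castSucc p) := by
              rw [← Finset.sum_sub_distrib]
              exact Finset.sum_congr rfl fun i _ => by ring
          _ = 0 := by rw [← h1, ← h2]; ring
      intro i
      have h10 := congrFun hzero i
      simp only [Pi.zero_apply, sub_eq_zero] at h10
      exact h10
    have hdi : ∀ i, d (Fin.castSucc i) = cint i := by
      intro i
      have hb := ht1b i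
      rw [hteq i] at hb
      have hfl : ⌊(d (Fin.castSucc i) : ℝ) + (k : ℝ) * t0 i⌋ = 0 :=
        Int.floor_eq_zero_iff.mpr ⟨hb.1, hb.2⟩
      rw [Int.floor_intCast_add] at hfl
      simp only [hcint]
      omega
    rw [hx, hx₀]
    congr 1
    refine Finset.sum_congr rfl fun i _ => ?_
    rw [hdi i]


end
end

section
/- In the setting of a special region, let x_k denote the unique point of Λ ∩ H_k ∩ φ^{-1}(A). Then for each k there exists a subset I_k ⊆ {1, …, s} such that x_{k+1} = x_k + v_{s+1} − ∑_{i∈I_k} v_i; consequently φ(x_{k+1}) ≡ φ(x_k) + φ(v_{s+1}) modulo the lattice M generated by φ(v_1), …, φ(v_s). -/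
open MeasureTheory

noncomputable section MyAux

open Finset

lemma phiProj_sum' {n : ℕ} (s : ℕ) (c : Fin n → ℝ) (f : Fin n → (Fin (s+1) → ℝ)) :
    phiProj s (∑ i, c i • f i) = ∑ i, c i • phiProj s (f i) := by
  funext j
  simp [phiProj, Finset.sum_apply]

lemma vli (s : ℕ) (α : Fin s → ℝ) (v : Fin (s+1) → (Fin (s+1) → ℝ))
    (hz : zSpanSet v = Lam s α) : LinearIndependent ℝ v := by
  classical
  have hmem : ∀ y ∈ Lam s α, y ∈ Submodule.span ℝ (Set.range v) := by
    intro y hy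
    rw [← hz] at hy
    obtain ⟨c, rfl⟩ := hy
    exact Submodule.sum_mem _ fun j _ =>
      Submodule.smul_mem _ _ (Submodule.subset_span ⟨j, rfl⟩)
  have halpha : alphaExt s α ∈ Lam s α := by
    refine ⟨1, 0, ?_⟩
    funext j
    induction j using Fin.lastCases with
    | last => simp [alphaExt]
    | cast j => simp [alphaExt]
  have hcast : ∀ i : Fin s,
      (Pi.single (Fin.castSucc i) 1 : Fin (s+1) → ℝ) ∈ Submodule.span ℝ (Set.range v) := by
    intro i
    apply hmem
    refine ⟨0, Pi.single i 1, ?_⟩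
    funext j
    induction j using Fin.lastCases with
    | last => simp [Pi.single_apply, (Fin.castSucc_lt_last i).ne']
    | cast j => simp [Pi.single_apply, Fin.castSucc_inj]
  have hlast : (Pi.single (Fin.last s) 1 : Fin (s+1) → ℝ)
      = alphaExt s α - ∑ i, α i • (Pi.single (Fin.castSucc i) 1 : Fin (s+1) → ℝ) := by
    funext j
    induction j using Fin.lastCases with
    | last =>
        simp [alphaExt, Finset.sum_apply, Pi.single_apply,
          fun i : Fin s => (Fin.castSucc_lt_last i).ne]
    | cast j =>
        simp [alphaExt, Finset.sum_apply, Pi.single_apply, Fin.castSucc_inj,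
          (Fin.castSucc_lt_last j).ne]
  have hsingle : ∀ j : Fin (s+1),
      (Pi.single j 1 : Fin (s+1) → ℝ) ∈ Submodule.span ℝ (Set.range v) := by
    intro j
    induction j using Fin.lastCases with
    | last =>
        rw [hlast]
        exact sub_mem (hmem _ halpha)
          (Submodule.sum_mem _ fun i _ => Submodule.smul_mem _ _ (hcast i))
    | cast j => exact hcast j
  have hspan : ⊤ ≤ Submodule.span ℝ (Set.range v) := by
    intro y _
    rw [pi_eq_sum_univ y]
    refine Submodule.sum_mem _ fun i _ => ?_
    have hone : (fun j => if i = j then (1:ℝ) else 0) = Pi.single i 1 := by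
      funext j; simp [Pi.single_apply, eq_comm]
    rw [hone]
    exact Submodule.smul_mem _ _ (hsingle i)
  have hcard : Fintype.card (Fin (s+1)) = Module.finrank ℝ (Fin (s+1) → ℝ) := by simp
  have hB := coe_basisOfTopLeSpanOfCardEqFinrank v hspan hcard
  rw [← hB]
  exact (basisOfTopLeSpanOfCardEqFinrank v hspan hcard).linearIndependent

lemma coeff_match (s : ℕ) (v : Fin (s+1) → (Fin (s+1) → ℝ)) (hli : LinearIndependent ℝ v)
    (b : Fin (s+1) → ℝ) (c : Fin s → ℝ) (κ : ℝ)
    (h : ∑ j, b j • v j = (∑ i, c i • v i.castSucc) + κ • v (Fin.last s)) :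
    b (Fin.last s) = κ := by
  classical
  have h0 : ∑ j, (b j - (Fin.snoc c κ : Fin (s+1) → ℝ) j) • v j = 0 := by
    have hγ : ∑ j, (Fin.snoc c κ : Fin (s+1) → ℝ) j • v j
        = (∑ i, c i • v i.castSucc) + κ • v (Fin.last s) := by
      rw [Fin.sum_univ_castSucc]
      simp
    calc ∑ j, (b j - (Fin.snoc c κ : Fin (s+1) → ℝ) j) • v j
        = ∑ j, b j • v j - ∑ j, (Fin.snoc c κ : Fin (s+1) → ℝ) j • v j := by
          rw [← Finset.sum_sub_distrib]
          exact Finset.sum_congr rfl fun j _ => sub_smul _ _ _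
      _ = 0 := by rw [h, hγ, sub_self]
  have h1 : b (Fin.last s) - (Fin.snoc c κ : Fin (s+1) → ℝ) (Fin.last s) = 0 :=
    Fintype.linearIndependent_iff.mp hli _ h0 (Fin.last s)
  rw [Fin.snoc_last] at h1
  linarith

lemma phi_li (s : ℕ) (v : Fin (s+1) → (Fin (s+1) → ℝ))
    (hli : LinearIndependent ℝ v)
    (y : Fin (s+1) → ℝ) (hyH : y ∈ Hplane s v 1)
    (hyA : phiProj s y ∈ specialRegionOf s v) :
    LinearIndependent ℝ (fun i : Fin s => phiProj s (v i.castSucc)) := by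
  classical
  set V := Submodule.span ℝ (Set.range (fun i : Fin s => v i.castSucc)) with hV
  have hvlast : v (Fin.last s) ∉ V := by
    have h := hli.notMem_span_image (s := {j | j ≠ Fin.last s}) (x := Fin.last s) (by simp)
    have himg : v '' {j | j ≠ Fin.last s} = Set.range (fun i : Fin s => v i.castSucc) := by
      ext z
      constructor
      · rintro ⟨j, hj, rfl⟩
        obtain ⟨i, rfl⟩ := Fin.exists_castSucc_eq.mpr hj
        exact ⟨i, rfl⟩
      · rintro ⟨i, rfl⟩
        exact ⟨i.castSucc, (Fin.castSucc_lt_last i).ne, rfl⟩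
    rwa [himg] at h
  have helast : (Pi.single (Fin.last s) 1 : Fin (s+1) → ℝ) ∉ V := by
    intro hmemV
    obtain ⟨c, hc⟩ := hyH
    obtain ⟨p, ⟨t, ht, rfl⟩, hp⟩ := hyA
    apply hvlast
    have hy' : y = (∑ i, t i • v i.castSucc)
        + (y (Fin.last s) - (∑ i, t i • v i.castSucc) (Fin.last s))
          • (Pi.single (Fin.last s) 1 : Fin (s+1) → ℝ) := by
      funext j
      induction j using Fin.lastCases with
      | last => simp
      | cast j =>
          have h1 := congrFun hp j
          simp only [phiProj] at h1
          simp [Pi.single_apply, (Fin.castSucc_lt_last j).ne, h1]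
    have hveq : v (Fin.last s) = (∑ i, t i • v i.castSucc) - (∑ i, c i • v i.castSucc)
        + (y (Fin.last s) - (∑ i, t i • v i.castSucc) (Fin.last s))
          • (Pi.single (Fin.last s) 1 : Fin (s+1) → ℝ) := by
      have := hc
      rw [hy'] at this
      have h2 : (((1:ℤ) : ℝ)) • v (Fin.last s) = v (Fin.last s) := by norm_num
      rw [h2] at this
      linear_combination (norm := abel) - this
    rw [hveq]
    refine add_mem (sub_mem ?_ ?_) (Submodule.smul_mem _ _ hmemV) <;>
      exact Submodule.sum_mem _ fun i _ =>
        Submodule.smul_mem _ _ (Submodule.subset_span ⟨i, rfl⟩)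
  rw [Fintype.linearIndependent_iff]
  intro g hg
  set w0 : Fin (s+1) → ℝ := ∑ i, g i • v i.castSucc with hw0def
  have hφw0 : phiProj s w0 = 0 := by
    rw [hw0def, phiProj_sum', hg]
  have hw0last : w0 (Fin.last s) = 0 := by
    by_contra h0
    apply helast
    have : (Pi.single (Fin.last s) 1 : Fin (s+1) → ℝ) = (w0 (Fin.last s))⁻¹ • w0 := by
      funext j
      induction j using Fin.lastCases with
      | last => simp [Pi.single_apply, inv_mul_cancel₀ h0]
      | cast j =>
          have h1 := congrFun hφw0 j
          simp only [phiProj, Pi.zero_apply] at h1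
          simp [Pi.single_apply, (Fin.castSucc_lt_last j).ne, h1]
    rw [this]
    exact Submodule.smul_mem _ _
      (Submodule.sum_mem _ fun i _ =>
        Submodule.smul_mem _ _ (Submodule.subset_span ⟨i, rfl⟩))
  have hw0 : w0 = 0 := by
    funext j
    induction j using Fin.lastCases with
    | last => exact hw0last
    | cast j =>
        have h1 := congrFun hφw0 j
        simpa [phiProj] using h1
  have hcomp : LinearIndependent ℝ (v ∘ Fin.castSucc) :=
    hli.comp Fin.castSucc (Fin.castSucc_injective s)
  exact Fintype.linearIndependent_iff.mp hcomp g hw0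

end MyAux

noncomputable section

/-- With `x k` the unique point of `Λ ∩ H_k ∩ φ^{-1}(A)`, there is
`I_k ⊆ {1,…,s}` with `x_{k+1} = x_k + v_{s+1} − ∑_{i∈I_k} v_i`; consequently
`φ(x_{k+1}) ≡ φ(x_k) + φ(v_{s+1})` modulo the lattice `M` generated by
`φ(v_1), …, φ(v_s)`. -/
theorem successive_points_differ_by_v_last_minus_subset_sum
    (s : ℕ) (α : Fin s → ℝ) (hα : TotallyIrrational s α)
    (v : Fin (s+1) → (Fin (s+1) → ℝ)) (hv : IsSpecialBasis s α v)
    (x : ℤ → (Fin (s+1) → ℝ))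
    (hx : ∀ k : ℤ, x k ∈ Lam s α ∧ x k ∈ Hplane s v k ∧
      phiProj s (x k) ∈ specialRegionOf s v) :
    ∀ k : ℤ, ∃ I : Finset (Fin s),
      x (k+1) = x k + v (Fin.last s) - ∑ i ∈ I, v i.castSucc ∧
      phiProj s (x (k+1)) - (phiProj s (x k) + phiProj s (v (Fin.last s)))
        ∈ zSpanSet (fun i : Fin s => phiProj s (v i.castSucc)) := by
  classical
  intro k
  obtain ⟨hΛk, hHk, hAk⟩ := hx k
  obtain ⟨hΛk1, hHk1, hAk1⟩ := hx (k+1)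
  obtain ⟨hΛ1, hH1, hA1⟩ := hx 1
  have hli : LinearIndependent ℝ v := vli s α v hv.2.1
  have hliw : LinearIndependent ℝ (fun i : Fin s => phiProj s (v i.castSucc)) :=
    phi_li s v hli (x 1) hH1 hA1
  rw [← hv.2.1] at hΛk hΛk1
  obtain ⟨b, hb⟩ := hΛk
  obtain ⟨b', hb'⟩ := hΛk1
  obtain ⟨c, hc⟩ := hHk
  obtain ⟨c', hc'⟩ := hHk1
  -- last coefficients
  have hblast : b (Fin.last s) = k := by
    have := coeff_match s v hli (fun j => ((b j : ℤ) : ℝ)) c ((k : ℤ) : ℝ)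
      (by rw [← hb, ← hc])
    exact_mod_cast show ((b (Fin.last s) : ℤ) : ℝ) = ((k : ℤ) : ℝ) from this
  have hb'last : b' (Fin.last s) = k + 1 := by
    have := coeff_match s v hli (fun j => ((b' j : ℤ) : ℝ)) c' (((k+1) : ℤ) : ℝ)
      (by rw [← hb', ← hc'])
    exact_mod_cast show ((b' (Fin.last s) : ℤ) : ℝ) = (((k+1) : ℤ) : ℝ) from this
  set d : Fin s → ℤ := fun i => b' i.castSucc - b i.castSucc with hddef
  have hsub : x (k+1) - x k = ∑ j, ((b' j - b j : ℤ) : ℝ) • v j := by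
    rw [hb, hb', ← Finset.sum_sub_distrib]
    refine Finset.sum_congr rfl fun j _ => ?_
    push_cast
    rw [sub_smul]
  have hd : x (k+1) - x k
      = v (Fin.last s) + ∑ i, ((d i : ℤ) : ℝ) • v i.castSucc := by
    have h5 : b' (Fin.last s) - b (Fin.last s) = 1 := by omega
    rw [hsub, Fin.sum_univ_castSucc, h5]
    simp only [Int.cast_one, one_smul, hddef]
    exact add_comm _ _
  -- memberships in A
  obtain ⟨p, ⟨t, ht, rfl⟩, hpt⟩ := hAk
  obtain ⟨p', ⟨t', ht', rfl⟩, hpt'⟩ := hAk1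
  obtain ⟨q, ⟨r, hr, rfl⟩, hqr⟩ := hv.1
  have hφt : phiProj s (x k) = ∑ i, t i • phiProj s (v i.castSucc) := by
    rw [← hpt, phiProj_sum']
  have hφt' : phiProj s (x (k+1)) = ∑ i, t' i • phiProj s (v i.castSucc) := by
    rw [← hpt', phiProj_sum']
  have hφr : phiProj s (v (Fin.last s)) = ∑ i, r i • phiProj s (v i.castSucc) := by
    rw [← hqr, phiProj_sum']
  have hφd : phiProj s (x (k+1)) - phiProj s (x k)
      = phiProj s (v (Fin.last s)) + ∑ i, ((d i : ℤ) : ℝ) • phiProj s (v i.castSucc) := by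
    funext j
    have h1 := congrFun hd j.castSucc
    simp only [Pi.sub_apply, Pi.add_apply, Finset.sum_apply, Pi.smul_apply,
      smul_eq_mul] at h1 ⊢
    simpa [phiProj] using h1
  have hcoef : ∀ i, t' i - t i - r i - (d i : ℝ) = 0 := by
    apply Fintype.linearIndependent_iff.mp hliw
    have hexp : ∑ i, (t' i - t i - r i - (d i : ℝ)) • phiProj s (v i.castSucc)
        = (∑ i, t' i • phiProj s (v i.castSucc)) - (∑ i, t i • phiProj s (v i.castSucc))
          - (∑ i, r i • phiProj s (v i.castSucc))
          - (∑ i, ((d i : ℤ) : ℝ) • phiProj s (v i.castSucc)) := by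
      rw [← Finset.sum_sub_distrib, ← Finset.sum_sub_distrib, ← Finset.sum_sub_distrib]
      refine Finset.sum_congr rfl fun i _ => ?_
      rw [sub_smul, sub_smul, sub_smul]
    rw [hexp, ← hφt, ← hφt', ← hφr, hφd]
    abel
  have hdval : ∀ i, d i = -1 ∨ d i = 0 := by
    intro i
    have h1 : ((-2 : ℤ) : ℝ) < (d i : ℝ) := by
      push_cast
      have := hcoef i
      nlinarith [(ht i).1, (ht i).2, (ht' i).1, (ht' i).2, (hr i).1, (hr i).2]
    have h2 : ((d i : ℝ)) < ((1 : ℤ) : ℝ) := by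
      push_cast
      have := hcoef i
      nlinarith [(ht i).1, (ht i).2, (ht' i).1, (ht' i).2, (hr i).1, (hr i).2]
    have h1' : (-2 : ℤ) < d i := by exact_mod_cast h1
    have h2' : d i < 1 := by exact_mod_cast h2
    omega
  refine ⟨Finset.univ.filter (fun i => d i = -1), ?_, ?_⟩
  · have hIsum : ∑ i, ((d i : ℤ) : ℝ) • v i.castSucc
        = - ∑ i ∈ Finset.univ.filter (fun i => d i = -1), v i.castSucc := by
      rw [← Finset.sum_filter_add_sum_filter_not Finset.univ (fun i => d i = -1)
        (fun i => ((d i : ℤ) : ℝ) • v i.castSucc)]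
      have hz : ∑ i ∈ Finset.univ.filter (fun i => ¬ d i = -1),
          ((d i : ℤ) : ℝ) • v i.castSucc = 0 := by
        refine Finset.sum_eq_zero fun i hi => ?_
        rcases hdval i with h | h
        · exact absurd h (Finset.mem_filter.mp hi).2
        · simp [h]
      rw [hz, add_zero, ← Finset.sum_neg_distrib]
      refine Finset.sum_congr rfl fun i hi => ?_
      rw [(Finset.mem_filter.mp hi).2]
      norm_num
    have := hd
    rw [hIsum] at this
    have h3 : x (k+1) = x k + (v (Fin.last s)
        + -∑ i ∈ Finset.univ.filter (fun i => d i = -1), v i.castSucc) :=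
      by linear_combination (norm := abel) this
    rw [h3]
    abel
  · refine ⟨d, ?_⟩
    have h4 : phiProj s (x (k+1)) - (phiProj s (x k) + phiProj s (v (Fin.last s)))
        = (phiProj s (x (k+1)) - phiProj s (x k)) - phiProj s (v (Fin.last s)) := by
      abel
    rw [h4, hφd]
    abel

end
end

section
/- In the setting of a special region, with x_k the unique point of Λ ∩ H_k ∩ φ^{-1}(A), the last coordinates are strictly increasing: φ_{s+1}(x_{k+1}) > φ_{s+1}(x_k) for all k ∈ ℤ. -/
open MeasureTheory

noncomputable section

namespace SpecialAux

lemma snoc_single (s : ℕ) (j : Fin s) :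
    (Fin.snoc (fun i => ((Pi.single j 1 : Fin s → ℤ) i : ℝ)) 0 : Fin (s+1) → ℝ)
      = Pi.single j.castSucc 1 := by
  funext i
  refine Fin.lastCases ?_ (fun i => ?_) i
  · simp [Fin.snoc_last, Pi.single_eq_of_ne (Fin.castSucc_lt_last j).ne']
  · simp [Fin.snoc_castSucc, Pi.single_apply, Fin.castSucc_inj]

lemma single_mem_Lam (s : ℕ) (α : Fin s → ℝ) (j : Fin s) :
    (Pi.single j.castSucc 1 : Fin (s+1) → ℝ) ∈ Lam s α := by
  refine ⟨0, Pi.single j 1, ?_⟩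
  rw [snoc_single]; simp

lemma alphaExt_mem_Lam (s : ℕ) (α : Fin s → ℝ) : alphaExt s α ∈ Lam s α := by
  refine ⟨1, 0, ?_⟩
  funext i
  refine Fin.lastCases ?_ (fun i => ?_) i <;>
    simp [Fin.snoc_last, Fin.snoc_castSucc]

lemma single_last_eq (s : ℕ) (α : Fin s → ℝ) :
    (Pi.single (Fin.last s) 1 : Fin (s+1) → ℝ)
      = alphaExt s α - ∑ j, α j • (Pi.single j.castSucc 1 : Fin (s+1) → ℝ) := by
  funext i
  refine Fin.lastCases ?_ (fun i => ?_) i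
  · simp [alphaExt, Fin.snoc_last, Finset.sum_apply,
      Pi.single_eq_of_ne (Fin.castSucc_lt_last _).ne']
  · have hne : i.castSucc ≠ Fin.last s := (Fin.castSucc_lt_last i).ne
    simp [alphaExt, Fin.snoc_castSucc, Finset.sum_apply, Pi.single_apply,
      Fin.castSucc_inj, hne]

lemma zSpan_sub_span {s : ℕ} (v : Fin (s+1) → (Fin (s+1) → ℝ)) :
    zSpanSet v ⊆ (Submodule.span ℝ (Set.range v) : Submodule ℝ (Fin (s+1) → ℝ)) := by
  rintro y ⟨c, rfl⟩
  exact Submodule.sum_mem _ fun i _ =>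
    Submodule.smul_mem _ _ (Submodule.subset_span (Set.mem_range_self i))

lemma span_top (s : ℕ) (α : Fin s → ℝ) (v : Fin (s+1) → (Fin (s+1) → ℝ))
    (hz : zSpanSet v = Lam s α) :
    ⊤ ≤ Submodule.span ℝ (Set.range v) := by
  have hLam : Lam s α ⊆ (Submodule.span ℝ (Set.range v) : Submodule ℝ (Fin (s+1) → ℝ)) := by
    rw [← hz]; exact zSpan_sub_span v
  have hsingle : ∀ j : Fin (s+1),
      (Pi.single j 1 : Fin (s+1) → ℝ) ∈ Submodule.span ℝ (Set.range v) := by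
    intro j
    refine Fin.lastCases ?_ (fun j => ?_) j
    · rw [single_last_eq s α]
      exact Submodule.sub_mem _ (hLam (alphaExt_mem_Lam s α))
        (Submodule.sum_mem _ fun i _ =>
          Submodule.smul_mem _ _ (hLam (single_mem_Lam s α i)))
    · exact hLam (single_mem_Lam s α j)
  rw [← (Pi.basisFun ℝ (Fin (s+1))).span_eq]
  refine Submodule.span_le.2 ?_
  rintro _ ⟨j, rfl⟩
  simpa using hsingle j

lemma exists_basis (s : ℕ) (α : Fin s → ℝ) (v : Fin (s+1) → (Fin (s+1) → ℝ))
    (hz : zSpanSet v = Lam s α) :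
    ∃ B : Module.Basis (Fin (s+1)) ℝ (Fin (s+1) → ℝ), ⇑B = v := by
  have hsp := span_top s α v hz
  have hli := linearIndependent_of_top_le_span_of_card_eq_finrank hsp (by simp)
  exact ⟨Module.Basis.mk hli hsp, Module.Basis.coe_mk _ _⟩

lemma key_zero (s : ℕ) (α : Fin s → ℝ) (hα : TotallyIrrational s α)
    (v : Fin (s+1) → (Fin (s+1) → ℝ)) (hz : zSpanSet v = Lam s α)
    (c : Fin s → ℝ) (hc : phiProj s (∑ i, c i • v i.castSucc) = 0) : c = 0 := by
  obtain ⟨B, hB⟩ := exists_basis s α v hz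
  set w : Fin (s+1) → ℝ := ∑ i, c i • v i.castSucc with hw
  have hw0 : ∀ j : Fin s, w j.castSucc = 0 := fun j => congrFun hc j
  have hwval : w = w (Fin.last s) • (Pi.single (Fin.last s) 1 : Fin (s+1) → ℝ) := by
    funext i
    refine Fin.lastCases ?_ (fun i => ?_) i
    · simp
    · have h1 := hw0 i
      have hne : i.castSucc ≠ Fin.last s := (Fin.castSucc_lt_last i).ne
      simp [h1, Pi.single_eq_of_ne hne]
  have hreprw : ⇑(B.repr w) = Fin.snoc c 0 := by
    have hwe : w = ∑ i, (Fin.snoc c 0 : Fin (s+1) → ℝ) i • B i := by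
      rw [hB, Fin.sum_univ_castSucc]
      simp [hw, Fin.snoc_castSucc, Fin.snoc_last]
    rw [hwe, B.repr_sum_self]
  by_cases hlam : w (Fin.last s) = 0
  · have hwzero : w = 0 := by rw [hwval, hlam, zero_smul]
    funext i
    have h2 := congrFun hreprw i.castSucc
    rw [hwzero] at h2
    simpa using h2.symm
  · exfalso
    -- integer representations of the generators
    have hmemE : ∀ j : Fin s, ∃ n : Fin (s+1) → ℤ,
        (Pi.single j.castSucc 1 : Fin (s+1) → ℝ) = ∑ i, (n i : ℝ) • v i := by
      intro j
      have := single_mem_Lam s α j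
      rw [← hz] at this
      exact this
    choose n hn using hmemE
    have hmemA : ∃ n0 : Fin (s+1) → ℤ, alphaExt s α = ∑ i, (n0 i : ℝ) • v i := by
      have := alphaExt_mem_Lam s α
      rw [← hz] at this
      exact this
    obtain ⟨n0, hn0⟩ := hmemA
    have hEj : ∀ j : Fin s, ⇑(B.repr (Pi.single j.castSucc 1)) = fun i => ((n j i : ℝ)) := by
      intro j
      rw [hn j, ← hB, B.repr_sum_self]
    have hE0 : ⇑(B.repr (alphaExt s α)) = fun i => ((n0 i : ℝ)) := by
      rw [hn0, ← hB, B.repr_sum_self]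
    -- δ = 0
    have hdelta0 : B.repr (Pi.single (Fin.last s) 1) (Fin.last s) = 0 := by
      have h3 := congrFun hreprw (Fin.last s)
      rw [hwval] at h3
      rw [_root_.map_smul] at h3
      simp only [Finsupp.smul_apply, smul_eq_mul, Fin.snoc_last] at h3
      rcases mul_eq_zero.mp h3 with h | h
      · exact absurd h hlam
      · exact h
    -- δ as linear combination
    have hdelta : B.repr (Pi.single (Fin.last s) 1) (Fin.last s)
        = (n0 (Fin.last s) : ℝ) - ∑ j, α j * (n j (Fin.last s) : ℝ) := by
      rw [single_last_eq s α, map_sub, map_sum]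
      simp only [_root_.map_smul, Finsupp.sub_apply, Finsupp.coe_finset_sum, Finset.sum_apply,
        Finsupp.smul_apply, smul_eq_mul]
      rw [congrFun hE0 (Fin.last s)]
      congr 1
      refine Finset.sum_congr rfl fun j _ => ?_
      rw [congrFun (hEj j) (Fin.last s)]
    have heq : (∑ j, (-(n j (Fin.last s)) : ℝ) * α j) + ((n0 (Fin.last s) : ℝ)) = 0 := by
      rw [hdelta] at hdelta0
      have : ∑ j, (-(n j (Fin.last s)) : ℝ) * α j = -∑ j, α j * (n j (Fin.last s) : ℝ) := by
        rw [← Finset.sum_neg_distrib]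
        exact Finset.sum_congr rfl fun j _ => by push_cast; ring
      rw [this]
      linarith
    have hirr := hα (fun j => -(n j (Fin.last s))) (n0 (Fin.last s)) (by exact_mod_cast heq)
    have hnlast : ∀ j : Fin s, n j (Fin.last s) = 0 := by
      intro j
      have := congrFun hirr.1 j
      simpa [neg_eq_zero] using this
    have hn0last : n0 (Fin.last s) = 0 := hirr.2
    -- every standard basis vector has last repr coordinate 0
    have hall : ∀ j : Fin (s+1), B.repr (Pi.single j 1) (Fin.last s) = 0 := by
      intro j
      refine Fin.lastCases ?_ (fun j => ?_) j
      · exact hdelta0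
      · rw [congrFun (hEj j) (Fin.last s), hnlast j]
        norm_num
    -- but v last has last repr coordinate 1
    have hvlast : v (Fin.last s) = ∑ j, (v (Fin.last s) j) • (Pi.single j 1 : Fin (s+1) → ℝ) := by
      funext i
      simp [Finset.sum_apply, Pi.single_apply]
    have h4 : B.repr (v (Fin.last s)) (Fin.last s) = 0 := by
      rw [hvlast, map_sum]
      simp only [_root_.map_smul, Finsupp.coe_finset_sum, Finset.sum_apply, Finsupp.smul_apply,
        smul_eq_mul]
      refine Finset.sum_eq_zero fun j _ => ?_
      rw [hall j, mul_zero]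
    have h5 : B.repr (v (Fin.last s)) (Fin.last s) = 1 := by
      rw [← hB]
      simp [Module.Basis.repr_self]
    rw [h4] at h5
    exact zero_ne_one h5

lemma coords (s : ℕ) (α : Fin s → ℝ) (hα : TotallyIrrational s α)
    (v : Fin (s+1) → (Fin (s+1) → ℝ)) (hz : zSpanSet v = Lam s α)
    (u : Fin s → ℝ) (hu : ∀ i, 0 ≤ u i ∧ u i < 1)
    (huv : phiProj s (v (Fin.last s)) = phiProj s (∑ i, u i • v i.castSucc))
    (k : ℤ) (y : Fin (s+1) → ℝ)
    (h1 : y ∈ Lam s α) (h2 : y ∈ Hplane s v k)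
    (h3 : phiProj s y ∈ specialRegionOf s v) :
    ∃ m : Fin (s+1) → ℤ, y = ∑ i, (m i : ℝ) • v i ∧ (m (Fin.last s) : ℝ) = (k : ℝ) ∧
      ∀ i : Fin s, 0 ≤ (m i.castSucc : ℝ) + (k : ℝ) * u i ∧
        (m i.castSucc : ℝ) + (k : ℝ) * u i < 1 := by
  obtain ⟨B, hB⟩ := exists_basis s α v hz
  rw [← hz] at h1
  obtain ⟨m, hm⟩ := h1
  obtain ⟨c, hcy⟩ := h2
  -- repr of y two ways
  have hr1 : ⇑(B.repr y) = fun i => ((m i : ℝ)) := by rw [hm, ← hB, B.repr_sum_self]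
  have hr2 : ⇑(B.repr y) = Fin.snoc c (k : ℝ) := by
    have hye : y = ∑ i, (Fin.snoc c (k : ℝ) : Fin (s+1) → ℝ) i • B i := by
      rw [hB, Fin.sum_univ_castSucc]
      simp [hcy, Fin.snoc_castSucc, Fin.snoc_last]
    rw [hye, B.repr_sum_self]
  have hmlast : (m (Fin.last s) : ℝ) = (k : ℝ) := by
    have := (congrFun hr1 (Fin.last s)).symm.trans (congrFun hr2 (Fin.last s))
    simpa using this
  obtain ⟨z, ⟨t, ht, hzt⟩, hzy⟩ := h3
  refine ⟨m, hm, hmlast, fun i => ?_⟩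
  -- show m_i + k u_i = t i
  have hteq : ∀ i : Fin s, (m i.castSucc : ℝ) + (k : ℝ) * u i = t i := by
    have hc0 : (fun i => (m i.castSucc : ℝ) + (k : ℝ) * u i - t i) = (0 : Fin s → ℝ) := by
      apply key_zero s α hα v hz
      funext j
      have eA : y j.castSucc = ∑ i, t i * v i.castSucc j.castSucc := by
        have := congrFun hzy j
        rw [hzt] at this
        simpa [phiProj, Finset.sum_apply] using this.symm
      have eB : y j.castSucc = (∑ i : Fin s, (m i.castSucc : ℝ) * v i.castSucc j.castSucc)
          + (k : ℝ) * v (Fin.last s) j.castSucc := by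
        have := congrFun hm j.castSucc
        rw [Fin.sum_univ_castSucc] at this
        simpa [Finset.sum_apply, hmlast] using this
      have eC : v (Fin.last s) j.castSucc = ∑ i, u i * v i.castSucc j.castSucc := by
        have := congrFun huv j
        simpa [phiProj, Finset.sum_apply] using this
      have expand : (∑ i, ((m i.castSucc : ℝ) + (k : ℝ) * u i - t i) • v i.castSucc) j.castSucc
          = (∑ i : Fin s, (m i.castSucc : ℝ) * v i.castSucc j.castSucc)
            + (k : ℝ) * (∑ i, u i * v i.castSucc j.castSucc)
            - ∑ i, t i * v i.castSucc j.castSucc := by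
        simp only [Finset.sum_apply, Pi.smul_apply, smul_eq_mul, add_mul, sub_mul,
          Finset.sum_add_distrib, Finset.sum_sub_distrib, Finset.mul_sum]
        ring_nf
      simp only [phiProj, Pi.zero_apply]
      rw [expand, ← eC]
      linarith [eA, eB]
    intro i
    have := congrFun hc0 i
    simpa [sub_eq_zero] using this
  rw [hteq i]
  exact ht i

end SpecialAux


/-- With `x k` the unique point of `Λ ∩ H_k ∩ φ^{-1}(A)`, the last
coordinates `φ_{s+1}(x_k)` are strictly increasing in `k`. -/
theorem last_coordinates_strictly_increasing
    (s : ℕ) (α : Fin s → ℝ) (hα : TotallyIrrational s α)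
    (v : Fin (s+1) → (Fin (s+1) → ℝ)) (hv : IsSpecialBasis s α v)
    (x : ℤ → (Fin (s+1) → ℝ))
    (hx : ∀ k : ℤ, x k ∈ Lam s α ∧ x k ∈ Hplane s v k ∧
      phiProj s (x k) ∈ specialRegionOf s v) :
    ∀ k : ℤ, x k (Fin.last s) < x (k+1) (Fin.last s) := by
  classical
  obtain ⟨hS1, hz, hS4⟩ := hv
  obtain ⟨zu, ⟨u, hu, hzu⟩, huv0⟩ := hS1
  have huv : phiProj s (v (Fin.last s)) = phiProj s (∑ i, u i • v i.castSucc) := by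
    rw [← hzu]; exact huv0.symm
  intro k
  obtain ⟨hL0, hH0, hA0⟩ := hx k
  obtain ⟨hL1, hH1, hA1⟩ := hx (k+1)
  obtain ⟨m, hm, hmlast, hmt⟩ :=
    SpecialAux.coords s α hα v hz u hu huv k (x k) hL0 hH0 hA0
  obtain ⟨m', hm', hmlast', hmt'⟩ :=
    SpecialAux.coords s α hα v hz u hu huv (k+1) (x (k+1)) hL1 hH1 hA1
  set d : Fin s → ℤ := fun i => m' i.castSucc - m i.castSucc with hd
  have hdrange : ∀ i : Fin s, d i = 0 ∨ d i = -1 := by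
    intro i
    have h1 := hmt i
    have h2 := hmt' i
    have h3 := hu i
    have hdc : ((d i : ℝ)) = ((m' i.castSucc : ℝ)) - ((m i.castSucc : ℝ)) := by
      simp [hd]
    have hlt : (d i : ℝ) < 1 := by
      rw [hdc]
      push_cast at h2 ⊢
      nlinarith [h1.1, h2.2, h3.1]
    have hgt : (-2 : ℝ) < (d i : ℝ) := by
      rw [hdc]
      push_cast at h2 ⊢
      nlinarith [h1.2, h2.1, h3.2]
    have hlt' : d i < 1 := by exact_mod_cast hlt
    have hgt' : -2 < d i := by exact_mod_cast hgt
    omega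
  -- evaluate last coordinates
  have hxk : x k (Fin.last s)
      = (∑ i : Fin s, (m i.castSucc : ℝ) * v i.castSucc (Fin.last s))
        + (k : ℝ) * v (Fin.last s) (Fin.last s) := by
    have := congrFun hm (Fin.last s)
    rw [Fin.sum_univ_castSucc] at this
    simpa [Finset.sum_apply, hmlast] using this
  have hxk1 : x (k+1) (Fin.last s)
      = (∑ i : Fin s, (m' i.castSucc : ℝ) * v i.castSucc (Fin.last s))
        + ((k : ℝ) + 1) * v (Fin.last s) (Fin.last s) := by
    have := congrFun hm' (Fin.last s)
    rw [Fin.sum_univ_castSucc] at this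
    have hc : ((m' (Fin.last s) : ℝ)) = (k : ℝ) + 1 := by push_cast at hmlast' ⊢; linarith
    simpa [Finset.sum_apply, hc] using this
  set I : Finset (Fin s) := Finset.univ.filter (fun i => d i = -1) with hI
  have hsum : (∑ i : Fin s, (m' i.castSucc : ℝ) * v i.castSucc (Fin.last s))
      - (∑ i : Fin s, (m i.castSucc : ℝ) * v i.castSucc (Fin.last s))
      = - ∑ i ∈ I, v i.castSucc (Fin.last s) := by
    rw [← Finset.sum_sub_distrib]
    have step1 : ∀ i : Fin s,
        (m' i.castSucc : ℝ) * v i.castSucc (Fin.last s)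
          - (m i.castSucc : ℝ) * v i.castSucc (Fin.last s)
          = (d i : ℝ) * v i.castSucc (Fin.last s) := by
      intro i; simp [hd]; push_cast; ring
    rw [Finset.sum_congr rfl fun i _ => step1 i]
    rw [← Finset.sum_filter_add_sum_filter_not Finset.univ (fun i => d i = -1)
      (fun i => (d i : ℝ) * v i.castSucc (Fin.last s))]
    have e1 : ∑ i ∈ Finset.univ.filter (fun i => d i = -1),
        (d i : ℝ) * v i.castSucc (Fin.last s)
        = ∑ i ∈ I, -(v i.castSucc (Fin.last s)) := by
      refine Finset.sum_congr rfl fun i hi => ?_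
      have : d i = -1 := (Finset.mem_filter.mp hi).2
      rw [this]; push_cast; ring
    have e2 : ∑ i ∈ Finset.univ.filter (fun i => ¬ d i = -1),
        (d i : ℝ) * v i.castSucc (Fin.last s) = 0 := by
      refine Finset.sum_eq_zero fun i hi => ?_
      have hni : ¬ d i = -1 := (Finset.mem_filter.mp hi).2
      have : d i = 0 := by rcases hdrange i with h | h; exact h; exact absurd h hni
      rw [this]; norm_num
    rw [e1, e2, Finset.sum_neg_distrib]
    ring
  have hpos := hS4 I
  linarith [hxk, hxk1, hsum, hpos]

end
end

section
/- In the special-region construction step, suppose v_1, …, v_{s+1} satisfy (S1)–(S4), let v_j' = v_j − v_{s+1}, and let v_{s+1}' = v_{s+1} − b_j v_j' − ∑_{i≠j} b_i v_i for nonnegative integers b_i chosen so that φ(v_{s+1}') ∈ A' := φ(P(v_1, …, v_j', …, v_s)). Then the new basis v_1, …, v_j', …, v_s, v_{s+1}' satisfies φ_{s+1}(v_{s+1}') ≥ φ_{s+1}(v_{s+1}) > 0 and φ_{s+1}(v_j') < φ_{s+1}(v_j) ≤ 0, and satisfies condition (S4): φ_{s+1}(v_{s+1}') − ∑_{i∈I}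 φ_{s+1}(w_i) > 0 for every subset I, where w_i denotes the new basis vectors with index in {1,…,s}. -/
open MeasureTheory

noncomputable section

/-- In the construction step, with `v_j' = v_j − v_{s+1}` and
`v_{s+1}' = v_{s+1} − b_j v_j' − ∑_{i≠j} b_i v_i` (`b_i ∈ ℕ`) chosen so that
`φ(v_{s+1}') ∈ A' = φ(P(v_1,…,v_j',…,v_s))`, the new family satisfies
`φ_{s+1}(v_{s+1}') ≥ φ_{s+1}(v_{s+1}) > 0`, `φ_{s+1}(v_j') < φ_{s+1}(v_j) ≤ 0`,
and condition (S4). -/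
theorem construction_step_preserves_S4
    (s : ℕ) (α : Fin s → ℝ) (hα : TotallyIrrational s α)
    (hrange : ∀ i, α i ∈ Set.Ico (0:ℝ) 1)
    (v : Fin (s+1) → (Fin (s+1) → ℝ)) (hv : IsSpecialBasis s α v)
    (hneg : ∀ i : Fin s, v i.castSucc (Fin.last s) ≤ 0)
    (hpos : 0 < v (Fin.last s) (Fin.last s))
    (j : Fin s) (b : Fin s → ℕ)
    -- the new family `w` with `w_j = v_j' = v_j − v_{s+1}`:
    (w : Fin (s+1) → (Fin (s+1) → ℝ))
    (hw : w = Fin.snoc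
      (fun i : Fin s =>
        if i = j then v j.castSucc - v (Fin.last s) else v i.castSucc)
      (v (Fin.last s) - (b j : ℝ) • (v j.castSucc - v (Fin.last s)) -
        ∑ i ∈ Finset.univ.erase j, (b i : ℝ) • v i.castSucc))
    -- `φ(v_{s+1}') ∈ A'`:
    (hA' : phiProj s (w (Fin.last s)) ∈ specialRegionOf s w) :
    (v (Fin.last s) (Fin.last s) ≤ w (Fin.last s) (Fin.last s) ∧
      0 < v (Fin.last s) (Fin.last s)) ∧
    (w j.castSucc (Fin.last s) < v j.castSucc (Fin.last s) ∧
      v j.castSucc (Fin.last s) ≤ 0) ∧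
    (∀ I : Finset (Fin s),
      0 < w (Fin.last s) (Fin.last s) - ∑ i ∈ I, w i.castSucc (Fin.last s)) := by
  subst hw
  simp only [Fin.snoc_last, Fin.snoc_castSucc, Pi.sub_apply, Pi.smul_apply,
    Finset.sum_apply, smul_eq_mul]
  have h1 : (b j : ℝ) * (v j.castSucc (Fin.last s) - v (Fin.last s) (Fin.last s)) ≤ 0 :=
    mul_nonpos_of_nonneg_of_nonpos (Nat.cast_nonneg _) (by linarith [hneg j])
  have h2 : ∀ I : Finset (Fin s),
      ∑ i ∈ I, (b i : ℝ) * v i.castSucc (Fin.last s) ≤ 0 := by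
    intro I
    apply Finset.sum_nonpos
    intro i _
    exact mul_nonpos_of_nonneg_of_nonpos (Nat.cast_nonneg _) (hneg i)
  have hge : v (Fin.last s) (Fin.last s) ≤
      v (Fin.last s) (Fin.last s)
        - (b j : ℝ) * (v j.castSucc (Fin.last s) - v (Fin.last s) (Fin.last s))
        - ∑ i ∈ Finset.univ.erase j, (b i : ℝ) * v i.castSucc (Fin.last s) := by
    have := h2 (Finset.univ.erase j)
    linarith
  refine ⟨⟨hge, hpos⟩, ⟨?_, hneg j⟩, ?_⟩
  · simp only [if_true, if_pos rfl, Pi.sub_apply]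
    linarith
  intro I
  have hsum : ∑ i ∈ I,
      (if i = j then v j.castSucc - v (Fin.last s) else v i.castSucc) (Fin.last s) ≤ 0 := by
    apply Finset.sum_nonpos
    intro i _
    by_cases hij : i = j
    · subst hij
      simp only [if_true, if_pos rfl, Pi.sub_apply]
      linarith [hneg i]
    · simp only [if_neg hij]
      exact hneg i
  linarith


end
end

section
/- For any totally irrational α ∈ [0,1)^s there exist infinitely many distinct special regions for α. -/
open MeasureTheory

noncomputable section SB

open Classical in
/-- Stern–Brocot style recursion producing pairs `((p,q),(p',q'))` of integer
approximations to `β` with `q β - p > 0 > q' β - p'` and `q p' - p q' = 1`. -/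
noncomputable def sbSt (β : ℝ) : ℕ → (ℤ × ℤ) × (ℤ × ℤ)
  | 0 => ((0, 1), (1, 0))
  | n+1 =>
      if 0 < (((sbSt β n).1.2 + (sbSt β n).2.2 : ℤ) : ℝ) * β
              - (((sbSt β n).1.1 + (sbSt β n).2.1 : ℤ) : ℝ)
      then (((sbSt β n).1.1 + (sbSt β n).2.1, (sbSt β n).1.2 + (sbSt β n).2.2), (sbSt β n).2)
      else ((sbSt β n).1, ((sbSt β n).1.1 + (sbSt β n).2.1, (sbSt β n).1.2 + (sbSt β n).2.2))

noncomputable def pA (β : ℝ) (n : ℕ) : ℤ := (sbSt β n).1.1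
noncomputable def qA (β : ℝ) (n : ℕ) : ℤ := (sbSt β n).1.2
noncomputable def pB (β : ℝ) (n : ℕ) : ℤ := (sbSt β n).2.1
noncomputable def qB (β : ℝ) (n : ℕ) : ℤ := (sbSt β n).2.2
noncomputable def thA (β : ℝ) (n : ℕ) : ℝ := (qA β n : ℝ) * β - (pA β n : ℝ)
noncomputable def thB (β : ℝ) (n : ℕ) : ℝ := (qB β n : ℝ) * β - (pB β n : ℝ)

theorem sbSt_cond (β : ℝ) (n : ℕ) :
    (((sbSt β n).1.2 + (sbSt β n).2.2 : ℤ) : ℝ) * β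
      - (((sbSt β n).1.1 + (sbSt β n).2.1 : ℤ) : ℝ) = thA β n + thB β n := by
  unfold thA thB pA qA pB qB; push_cast; ring

theorem sbSt_succ_pos {β : ℝ} {n : ℕ} (hc : 0 < thA β n + thB β n) :
    sbSt β (n+1) = ((pA β n + pB β n, qA β n + qB β n), (pB β n, qB β n)) := by
  rw [sbSt, if_pos (by rw [sbSt_cond]; exact hc)]
  simp [pA, qA, pB, qB]

theorem sbSt_succ_neg {β : ℝ} {n : ℕ} (hc : ¬ 0 < thA β n + thB β n) :
    sbSt β (n+1) = ((pA β n, qA β n), (pA β n + pB β n, qA β n + qB β n)) := by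
  rw [sbSt, if_neg (by rw [sbSt_cond]; exact hc)]
  simp [pA, qA, pB, qB]

variable {β : ℝ} (hirr : ∀ P Q : ℤ, (Q : ℝ) * β - (P : ℝ) = 0 → Q = 0) (hβ0 : 0 < β)

include hirr hβ0 in
theorem sbSt_inv (n : ℕ) :
    0 < thA β n ∧ thB β n < 0 ∧ 1 ≤ qA β n ∧ 0 ≤ qB β n ∧
      qA β n * pB β n - pA β n * qB β n = 1 := by
  induction n with
  | zero =>
      refine ⟨?_, ?_, ?_, ?_, ?_⟩ <;>
        simp [thA, thB, pA, qA, pB, qB, sbSt, hβ0]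
  | succ n ih =>
      obtain ⟨h1, h2, h3, h4, h5⟩ := ih
      by_cases hc : 0 < thA β n + thB β n
      · have h := sbSt_succ_pos hc
        have e1 : pA β (n+1) = pA β n + pB β n := by rw [pA, h]
        have e2 : qA β (n+1) = qA β n + qB β n := by rw [qA, h]
        have e3 : pB β (n+1) = pB β n := by rw [pB, h]
        have e4 : qB β (n+1) = qB β n := by rw [qB, h]
        refine ⟨?_, ?_, ?_, ?_, ?_⟩
        · rw [thA, e1, e2]; push_cast
          have : thA β n + thB β n = ((qA β n + qB β n : ℤ) : ℝ) * β - ((pA β n + pB β n : ℤ) : ℝ) := by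
            rw [thA, thB]; push_cast; ring
          push_cast at this; linarith [hc.trans_le (le_of_eq this)]
        · rw [thB, e3, e4]; exact h2
        · rw [e2]; omega
        · rw [e4]; exact h4
        · rw [e1, e2, e3, e4]; linear_combination h5
      ·
        have hne : thA β n + thB β n ≠ 0 := by
          intro h0
          have : ((qA β n + qB β n : ℤ) : ℝ) * β - ((pA β n + pB β n : ℤ) : ℝ) = 0 := by
            push_cast; rw [thA, thB] at h0; skip; linarith
          have := hirr _ _ this
          omega
        have hlt : thA β n + thB β n < 0 := lt_of_le_of_ne (not_lt.mp hc) hne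
        have h := sbSt_succ_neg hc
        have e1 : pA β (n+1) = pA β n := by rw [pA, h]
        have e2 : qA β (n+1) = qA β n := by rw [qA, h]
        have e3 : pB β (n+1) = pA β n + pB β n := by rw [pB, h]
        have e4 : qB β (n+1) = qA β n + qB β n := by rw [qB, h]
        refine ⟨?_, ?_, ?_, ?_, ?_⟩
        · rw [thA, e1, e2]; exact h1
        · rw [thB, e3, e4]; push_cast
          rw [thA, thB] at hlt; skip; linarith
        · rw [e2]; exact h3
        · rw [e4]; omega
        · rw [e1, e2, e3, e4]; linear_combination h5

include hirr hβ0 in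
theorem thB_le_succ (n : ℕ) : thB β n ≤ thB β (n+1) := by
  obtain ⟨h1, -, -, -, -⟩ := sbSt_inv hirr hβ0 n
  by_cases hc : 0 < thA β n + thB β n
  · have h := sbSt_succ_pos hc
    have e3 : pB β (n+1) = pB β n := by rw [pB, h]
    have e4 : qB β (n+1) = qB β n := by rw [qB, h]
    simp only [thB, e3, e4]; exact le_refl _
  · have h := sbSt_succ_neg hc
    have e3 : pB β (n+1) = pA β n + pB β n := by rw [pB, h]
    have e4 : qB β (n+1) = qA β n + qB β n := by rw [qB, h]
    simp only [thB, e3, e4]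
    rw [thA] at h1; push_cast; linarith

include hirr hβ0 in
theorem thB_mono {n m : ℕ} (hnm : n ≤ m) : thB β n ≤ thB β m := by
  induction m with
  | zero => simp_all
  | succ m ih =>
      rcases Nat.lt_or_ge n (m+1) with h | h
      · exact (ih (Nat.lt_succ_iff.mp h)).trans (thB_le_succ hirr hβ0 m)
      · have : n = m + 1 := le_antisymm hnm h
        simp [this]

include hirr hβ0 in
theorem thB_strict {n : ℕ} (hval : thA β n + thB β n < 0) : thB β n < thB β (n+1) := by
  obtain ⟨h1, -, -, -, -⟩ := sbSt_inv hirr hβ0 n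
  have h := sbSt_succ_neg (by linarith)
  have e3 : pB β (n+1) = pA β n + pB β n := by rw [pB, h]
  have e4 : qB β (n+1) = qA β n + qB β n := by rw [qB, h]
  simp only [thB, e3, e4]
  rw [thA] at h1; push_cast; linarith

include hirr hβ0 in
theorem exists_valid (n : ℕ) : ∃ m, n ≤ m ∧ thA β m + thB β m < 0 := by
  by_contra hcon
  push_neg at hcon
  have hpos : ∀ m, n ≤ m → 0 < thA β m + thB β m := by
    intro m hm
    rcases lt_or_eq_of_le (hcon m hm) with h | h
    · exact h
    · exfalso
      obtain ⟨-, -, h3, h4, -⟩ := sbSt_inv hirr hβ0 m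
      have : ((qA β m + qB β m : ℤ) : ℝ) * β - ((pA β m + pB β m : ℤ) : ℝ) = 0 := by
        rw [thA, thB] at h; push_cast; linarith
      have := hirr _ _ this
      omega
  have key : ∀ k : ℕ, thA β (n + k) = thA β n + k * thB β n ∧ thB β (n + k) = thB β n := by
    intro k
    induction k with
    | zero => simp
    | succ k ih =>
        have hm : n ≤ n + k := Nat.le_add_right n k
        have h := sbSt_succ_pos (hpos _ hm)
        have e1 : pA β (n+k+1) = pA β (n+k) + pB β (n+k) := by rw [pA, h]
        have e2 : qA β (n+k+1) = qA β (n+k) + qB β (n+k) := by rw [qA, h]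
        have e3 : pB β (n+k+1) = pB β (n+k) := by rw [pB, h]
        have e4 : qB β (n+k+1) = qB β (n+k) := by rw [qB, h]
        constructor
        · have : thA β (n+k+1) = thA β (n+k) + thB β (n+k) := by
            rw [thA, e1, e2, thA, thB]; push_cast; ring
          rw [show n + (k+1) = n + k + 1 from rfl, this, ih.1, ih.2]; push_cast; ring
        · rw [show n + (k+1) = n + k + 1 from rfl, thB, e3, e4, ← thB, ih.2]
  obtain ⟨-, hB, -, -, -⟩ := sbSt_inv hirr hβ0 n
  set k : ℕ := ⌈thA β n / (-thB β n)⌉₊ + 1 with hk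
  have h1 : thA β n / (-thB β n) ≤ (⌈thA β n / (-thB β n)⌉₊ : ℝ) := Nat.le_ceil _
  have hBpos : 0 < -thB β n := by linarith
  have h2 : thA β n ≤ (⌈thA β n / (-thB β n)⌉₊ : ℝ) * (-thB β n) := by
    rw [div_le_iff₀ hBpos] at h1; linarith
  have h3 : thA β n + (k : ℝ) * thB β n < 0 := by
    push_cast [hk]; nlinarith
  have h4 : 0 < thA β (n + k) := (sbSt_inv hirr hβ0 (n+k)).1
  rw [(key k).1] at h4
  linarith

end SB
noncomputable section VB

/-- The candidate basis vectors. -/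
def vbasis (s : ℕ) (α : Fin s → ℝ) (j0 : Fin s) (P Q P' Q' : ℤ) (d : Fin s → ℤ) :
    Fin (s+1) → (Fin (s+1) → ℝ) :=
  Fin.snoc
    (fun j : Fin s =>
      if j = j0 then
        Fin.snoc (fun k => (if k = j0 then (P' : ℝ) else 0) - (Q' : ℝ) * α k) (-(Q' : ℝ))
      else Fin.snoc (fun k => if k = j then (1:ℝ) else 0) (0:ℝ))
    (Fin.snoc (fun k => (Q : ℝ) * α k + (d k : ℝ)) (Q : ℝ))

/-- The integer correction vector. -/
def dvec (s : ℕ) (α : Fin s → ℝ) (j0 : Fin s) (P Q P' Q' : ℤ) : Fin s → ℤ :=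
  fun j => if j = j0 then -P
    else -⌊((Q : ℝ) + ((Q : ℝ) * α j0 - P) / ((P' : ℝ) - Q' * α j0) * Q') * α j⌋

variable {s : ℕ} {α : Fin s → ℝ} {j0 : Fin s} {P Q P' Q' : ℤ} {d : Fin s → ℤ}

theorem vb_cc (j k : Fin s) :
    vbasis s α j0 P Q P' Q' d (j.castSucc) (k.castSucc)
      = if j = j0 then ((if k = j0 then (P' : ℝ) else 0) - (Q' : ℝ) * α k)
        else (if k = j then (1:ℝ) else 0) := by
  by_cases h : j = j0 <;> simp [vbasis, h]

theorem vb_cl (j : Fin s) :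
    vbasis s α j0 P Q P' Q' d (j.castSucc) (Fin.last s)
      = if j = j0 then (-(Q' : ℝ)) else 0 := by
  by_cases h : j = j0 <;> simp [vbasis, h]

theorem vb_lc (k : Fin s) :
    vbasis s α j0 P Q P' Q' d (Fin.last s) (k.castSucc) = (Q : ℝ) * α k + (d k : ℝ) := by
  simp [vbasis]

theorem vb_ll : vbasis s α j0 P Q P' Q' d (Fin.last s) (Fin.last s) = (Q : ℝ) := by
  simp [vbasis]

/-- Evaluation of a combination of the first `s` basis vectors at coordinate `k`. -/
theorem sumEval (t : Fin s → ℝ) (k : Fin s) :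
    (∑ j, t j • vbasis s α j0 P Q P' Q' d (j.castSucc)) (k.castSucc)
      = t j0 * ((if k = j0 then (P' : ℝ) else 0) - (Q' : ℝ) * α k)
        + (if k = j0 then 0 else t k) := by
  rw [Finset.sum_apply]
  simp only [Pi.smul_apply, smul_eq_mul, vb_cc]
  rw [← Finset.add_sum_erase _ _ (Finset.mem_univ j0), if_pos rfl]
  congr 1
  rw [Finset.sum_congr rfl (fun j hj => by
    rw [if_neg (Finset.ne_of_mem_erase hj)])]
  have : ∀ j : Fin s, t j * (if k = j then (1:ℝ) else 0) = if k = j then t j else 0 := by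
    intro j; split_ifs <;> ring
  rw [Finset.sum_congr rfl (fun j _ => this j), Finset.sum_ite_eq]
  by_cases hk : k = j0
  · simp [hk]
  · simp [Finset.mem_erase, hk]

theorem sumEvalLast (t : Fin s → ℝ) :
    (∑ j, t j • vbasis s α j0 P Q P' Q' d (j.castSucc)) (Fin.last s)
      = t j0 * (-(Q' : ℝ)) := by
  rw [Finset.sum_apply]
  simp only [Pi.smul_apply, smul_eq_mul, vb_cl]
  have : ∀ j : Fin s, t j * (if j = j0 then -(Q':ℝ) else 0)
      = if j = j0 then t j * (-(Q':ℝ)) else 0 := by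
    intro j; split_ifs <;> ring
  rw [Finset.sum_congr rfl (fun j _ => this j), Finset.sum_ite_eq']
  simp

end VB
noncomputable section SBV

variable {s : ℕ} {α : Fin s → ℝ} {j0 : Fin s} {P Q P' Q' : ℤ} {d : Fin s → ℤ}

theorem combEval (u : Fin (s+1) → ℝ) (k : Fin s) :
    (∑ i, u i • vbasis s α j0 P Q P' Q' d i) (k.castSucc)
      = u (j0.castSucc) * ((if k = j0 then (P' : ℝ) else 0) - (Q' : ℝ) * α k)
        + (if k = j0 then 0 else u k.castSucc)
        + u (Fin.last s) * ((Q : ℝ) * α k + (d k : ℝ)) := by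
  rw [Fin.sum_univ_castSucc, Pi.add_apply, sumEval (fun j => u j.castSucc) k,
    Pi.smul_apply, smul_eq_mul, vb_lc]

theorem combEvalLast (u : Fin (s+1) → ℝ) :
    (∑ i, u i • vbasis s α j0 P Q P' Q' d i) (Fin.last s)
      = u (j0.castSucc) * (-(Q' : ℝ)) + u (Fin.last s) * (Q : ℝ) := by
  rw [Fin.sum_univ_castSucc, Pi.add_apply, sumEvalLast (fun j => u j.castSucc),
    Pi.smul_apply, smul_eq_mul, vb_ll]

theorem lamEval (n : ℤ) (a : Fin s → ℤ) (k : Fin s) :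
    (((n : ℝ) • alphaExt s α + Fin.snoc (fun i => (a i : ℝ)) 0 : Fin (s+1) → ℝ)) (k.castSucc)
      = (n : ℝ) * α k + (a k : ℝ) := by
  simp [alphaExt]

theorem lamEvalLast (n : ℤ) (a : Fin s → ℤ) :
    (((n : ℝ) • alphaExt s α + Fin.snoc (fun i => (a i : ℝ)) 0 : Fin (s+1) → ℝ)) (Fin.last s) = (n : ℝ) := by
  simp [alphaExt]

/-- S1: the projection of the last basis vector lies in the region. -/
theorem vbasis_S1 (hθA : 0 < (Q : ℝ) * α j0 - P) (hθB : (Q' : ℝ) * α j0 - P' < 0)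
    (hval : ((Q : ℝ) * α j0 - P) + ((Q' : ℝ) * α j0 - P') < 0) :
    phiProj s (vbasis s α j0 P Q P' Q' (dvec s α j0 P Q P' Q') (Fin.last s)) ∈
      specialRegionOf s (vbasis s α j0 P Q P' Q' (dvec s α j0 P Q P' Q')) := by
  set D : ℝ := (P' : ℝ) - Q' * α j0 with hD
  have hDpos : 0 < D := by rw [hD]; linarith
  set τ : ℝ := ((Q : ℝ) * α j0 - P) / D with hτ
  have hτ0 : 0 ≤ τ := div_nonneg hθA.le hDpos.le
  have hτ1 : τ < 1 := (div_lt_one hDpos).2 (by linarith)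
  set t : Fin s → ℝ := fun j => if j = j0 then τ
    else Int.fract (((Q : ℝ) + τ * Q') * α j) with ht
  refine ⟨∑ j, t j • vbasis s α j0 P Q P' Q' (dvec s α j0 P Q P' Q') (j.castSucc),
    ⟨t, ?_, rfl⟩, ?_⟩
  · intro j
    rw [ht]; dsimp only
    split_ifs
    · exact ⟨hτ0, hτ1⟩
    · exact ⟨Int.fract_nonneg _, Int.fract_lt_one _⟩
  · funext k
    simp only [phiProj]
    rw [sumEval t k, vb_lc]
    have htj0 : t j0 = τ := by rw [ht]; simp
    by_cases hk : k = j0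
    · rw [hk]
      rw [if_pos rfl, if_pos rfl, htj0]
      have h1 : τ * ((P' : ℝ) - Q' * α j0) = (Q : ℝ) * α j0 - P := by
        rw [hτ, ← hD]; field_simp
      rw [show dvec s α j0 P Q P' Q' j0 = -P from if_pos rfl]
      push_cast
      linarith [h1]
    · rw [if_neg hk, if_neg hk, htj0]
      have htk : t k = Int.fract (((Q : ℝ) + τ * Q') * α k) := by rw [ht]; simp [hk]
      rw [htk, Int.fract, show dvec s α j0 P Q P' Q' k
        = -⌊((Q : ℝ) + ((Q : ℝ) * α j0 - P) / ((P' : ℝ) - Q' * α j0) * Q') * α k⌋ from if_neg hk,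
        ← hD, ← hτ]
      push_cast
      ring

/-- S4: the positivity condition on last coordinates. -/
theorem vbasis_S3 (hQ : 0 < Q) (hQ' : 0 ≤ Q') (I : Finset (Fin s)) :
    0 < vbasis s α j0 P Q P' Q' d (Fin.last s) (Fin.last s)
      - ∑ i ∈ I, vbasis s α j0 P Q P' Q' d (i.castSucc) (Fin.last s) := by
  rw [vb_ll]
  rw [Finset.sum_congr rfl (fun i _ => vb_cl i), Finset.sum_ite_eq']
  have hQR : (0:ℝ) < Q := by exact_mod_cast hQ
  have hQ'R : (0:ℝ) ≤ Q' := by exact_mod_cast hQ'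
  split_ifs <;> linarith

/-- S2: the vectors span the lattice. -/
theorem vbasis_S2 (hd0 : d j0 = -P) (hdet : Q * P' - P * Q' = 1) :
    zSpanSet (vbasis s α j0 P Q P' Q' d) = Lam s α := by
  have hdetR : (Q : ℝ) * P' - (P : ℝ) * Q' = 1 := by exact_mod_cast hdet
  ext x
  constructor
  · rintro ⟨c, rfl⟩
    refine ⟨c (Fin.last s) * Q - c (j0.castSucc) * Q',
      fun k => if k = j0 then c (j0.castSucc) * P' - c (Fin.last s) * P
        else c (Fin.last s) * d k + c (k.castSucc), ?_⟩
    funext i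
    refine Fin.lastCases ?_ (fun k => ?_) i
    · rw [combEvalLast (fun i => (c i : ℝ)), lamEvalLast]
      push_cast; ring
    · rw [combEval (fun i => (c i : ℝ)) k, lamEval]
      by_cases hk : k = j0
      · rw [hk]
        rw [if_pos rfl, if_pos rfl, if_pos rfl, hd0]
        push_cast; ring
      · rw [if_neg hk, if_neg hk, if_neg hk]
        push_cast; ring
  · rintro ⟨n, a, rfl⟩
    set N : ℤ := n * P' + a j0 * Q' with hN
    set cf : Fin (s+1) → ℤ :=
      Fin.snoc (fun j => if j = j0 then n * P + a j0 * Q else a j - N * d j) N with hcf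
    have hcj0 : cf (j0.castSucc) = n * P + a j0 * Q := by
      rw [hcf, Fin.snoc_castSucc, if_pos rfl]
    have hck : ∀ k : Fin s, k ≠ j0 → cf (k.castSucc) = a k - N * d k := by
      intro k hk; rw [hcf, Fin.snoc_castSucc, if_neg hk]
    have hcl : cf (Fin.last s) = N := by rw [hcf, Fin.snoc_last]
    refine ⟨cf, ?_⟩
    funext i
    refine Fin.lastCases ?_ (fun k => ?_) i
    · rw [lamEvalLast, combEvalLast (fun i => (cf i : ℝ))]
      rw [hcj0, hcl, hN]
      push_cast
      linear_combination (-(n : ℝ)) * hdetR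
    · rw [lamEval, combEval (fun i => (cf i : ℝ)) k]
      by_cases hk : k = j0
      · rw [hk]
        rw [if_pos rfl, if_pos rfl, hcj0, hcl, hd0, hN]
        push_cast
        linear_combination (-((a j0 : ℝ) + (n : ℝ) * α j0)) * hdetR
      · rw [if_neg hk, if_neg hk, hcj0, hcl, hck k hk, hN]
        push_cast
        linear_combination (-(n : ℝ) * α k) * hdetR

/-- Any point of the region has `j0`-coordinate `< P' - Q' α j0`. -/
theorem region_coord_lt (hDpos : 0 < (P' : ℝ) - Q' * α j0) {x : Fin s → ℝ}
    (hx : x ∈ specialRegionOf s (vbasis s α j0 P Q P' Q' d)) :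
    x j0 < (P' : ℝ) - Q' * α j0 := by
  obtain ⟨y, ⟨t, ht, rfl⟩, rfl⟩ := hx
  have : phiProj s (∑ j, t j • vbasis s α j0 P Q P' Q' d (j.castSucc)) j0
      = t j0 * ((P' : ℝ) - Q' * α j0) := by
    simp only [phiProj]
    rw [sumEval t j0, if_pos rfl, if_pos rfl]
    ring
  rw [this]
  exact mul_lt_of_lt_one_left hDpos (ht j0).2

/-- Any value in `[0, P' - Q' α j0)` is attained as `j0`-coordinate of a region point. -/
theorem region_coord_mem (hDpos : 0 < (P' : ℝ) - Q' * α j0) {c : ℝ}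
    (hc0 : 0 ≤ c) (hc1 : c < (P' : ℝ) - Q' * α j0) :
    ∃ x ∈ specialRegionOf s (vbasis s α j0 P Q P' Q' d), x j0 = c := by
  set t : Fin s → ℝ := fun j => if j = j0 then c / ((P' : ℝ) - Q' * α j0) else 0 with ht
  refine ⟨phiProj s (∑ j, t j • vbasis s α j0 P Q P' Q' d (j.castSucc)),
    ⟨_, ⟨t, ?_, rfl⟩, rfl⟩, ?_⟩
  · intro j
    rw [ht]; dsimp only
    split_ifs
    · exact ⟨div_nonneg hc0 hDpos.le, (div_lt_one hDpos).2 hc1⟩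
    · norm_num
  · simp only [phiProj]
    rw [sumEval t j0, if_pos rfl, if_pos rfl]
    have htj0 : t j0 = c / ((P' : ℝ) - Q' * α j0) := by rw [ht]; simp
    rw [htj0]
    field_simp
    simp

end SBV
noncomputable section

/-- For any totally irrational `α ∈ [0,1)^s` there are infinitely
many distinct special regions for `α`. -/
theorem infinitely_many_special_regions
    (s : ℕ) (hs : 0 < s) (α : Fin s → ℝ) (hα : TotallyIrrational s α)
    (hrange : ∀ i, α i ∈ Set.Ico (0:ℝ) 1) :
    {A : Set (Fin s → ℝ) | IsSpecialRegion s α A}.Infinite := by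
  set j0 : Fin s := ⟨0, hs⟩ with hj0
  set β : ℝ := α j0 with hβ
  -- irrationality of β
  have hirr : ∀ P Q : ℤ, (Q : ℝ) * β - (P : ℝ) = 0 → Q = 0 := by
    intro P Q h
    have e : ∀ i : Fin s, (((if i = j0 then Q else 0 : ℤ)) : ℝ) * α i
        = if i = j0 then (Q : ℝ) * α i else 0 := by
      intro i; split_ifs <;> simp
    have hsum : (∑ i, (((fun i => if i = j0 then Q else 0) i : ℤ) : ℝ) * α i)
        + ((-P : ℤ) : ℝ) = 0 := by
      rw [Finset.sum_congr rfl (fun i _ => e i), Finset.sum_ite_eq',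
        if_pos (Finset.mem_univ j0)]
      push_cast
      rw [← hβ]
      linarith
    have hm := hα (fun i => if i = j0 then Q else 0) (-P) hsum
    have := congrFun hm.1 j0
    simpa using this
  have hβpos : 0 < β := by
    rcases lt_or_eq_of_le (hrange j0).1 with h | h
    · exact h
    · exfalso
      have : (1:ℤ) = 0 := hirr 0 1 (by rw [← hβ] at h; rw [← h]; norm_num)
      norm_num at this
  have hinv := fun n => sbSt_inv hirr hβpos n
  -- the regions
  set R : ℕ → Set (Fin s → ℝ) := fun n => specialRegionOf s
    (vbasis s α j0 (pA β n) (qA β n) (pB β n) (qB β n)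
      (dvec s α j0 (pA β n) (qA β n) (pB β n) (qB β n))) with hR
  have hthA : ∀ n, (qA β n : ℝ) * α j0 - (pA β n : ℝ) = thA β n := by
    intro n; rw [← hβ, thA]
  have hthB : ∀ n, (qB β n : ℝ) * α j0 - (pB β n : ℝ) = thB β n := by
    intro n; rw [← hβ, thB]
  have hspec : ∀ n, thA β n + thB β n < 0 → IsSpecialRegion s α (R n) := by
    intro n hval
    obtain ⟨h1, h2, h3, h4, h5⟩ := hinv n
    refine ⟨vbasis s α j0 (pA β n) (qA β n) (pB β n) (qB β n)
      (dvec s α j0 (pA β n) (qA β n) (pB β n) (qB β n)), ⟨?_, ?_, ?_⟩, rfl⟩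
    · exact vbasis_S1 (by rw [hthA]; exact h1) (by rw [hthB]; exact h2)
        (by rw [hthA, hthB]; exact hval)
    · exact vbasis_S2 (if_pos rfl) h5
    · exact vbasis_S3 (by omega) h4
  -- an infinite family of valid indices
  choose g hg using exists_valid hirr hβpos
  set f : ℕ → ℕ := fun k => Nat.rec (g 0) (fun _ prev => g (prev + 1)) k with hf
  have hfs : ∀ k, f (k+1) = g (f k + 1) := fun k => rfl
  have hfval : ∀ k, thA β (f k) + thB β (f k) < 0 := by
    intro k
    cases k with
    | zero => exact (hg 0).2
    | succ k => rw [hfs]; exact (hg _).2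
  have hmono : ∀ k, f k + 1 ≤ f (k+1) := by
    intro k; rw [hfs]; exact (hg (f k + 1)).1
  have hthBmono : ∀ k, thB β (f k) < thB β (f (k+1)) := fun k =>
    lt_of_lt_of_le (thB_strict hirr hβpos (hfval k)) (thB_mono hirr hβpos (hmono k))
  have hstr : StrictMono (fun k => thB β (f k)) := strictMono_nat_of_lt_succ hthBmono
  -- distinctness of the regions
  have hneq : ∀ k l : ℕ, thB β (f k) < thB β (f l) → R (f k) ≠ R (f l) := by
    intro k l hlt heq
    have hDk : 0 < (pB β (f k) : ℝ) - (qB β (f k) : ℝ) * α j0 := by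
      have := (hinv (f k)).2.1
      rw [← hthB (f k)] at this; linarith
    have hDl : 0 < (pB β (f l) : ℝ) - (qB β (f l) : ℝ) * α j0 := by
      have := (hinv (f l)).2.1
      rw [← hthB (f l)] at this; linarith
    have hlt' : (pB β (f l) : ℝ) - (qB β (f l) : ℝ) * α j0
        < (pB β (f k) : ℝ) - (qB β (f k) : ℝ) * α j0 := by
      rw [← hthB (f k), ← hthB (f l)] at hlt
      linarith
    obtain ⟨x, hx, hxj0⟩ := region_coord_mem
      (s := s) (α := α) (j0 := j0) (P := pA β (f k)) (Q := qA β (f k))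
      (P' := pB β (f k)) (Q' := qB β (f k))
      (d := dvec s α j0 (pA β (f k)) (qA β (f k)) (pB β (f k)) (qB β (f k)))
      hDk hDl.le hlt'
    have hx' : x ∈ R (f l) := by rw [← heq]; exact hx
    have := region_coord_lt (s := s) (α := α) (j0 := j0) hDl hx'
    rw [hxj0] at this
    linarith
  -- conclude
  have hinj : Function.Injective (fun k => R (f k)) := by
    intro k l h
    by_contra hkl
    rcases lt_or_gt_of_ne hkl with h' | h'
    · exact hneq k l (hstr h') h
    · exact hneq l k (hstr h') h.symm
  exact Set.infinite_of_injective_forall_mem hinj (fun k => hspec (f k) (hfval k))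

end
end

section
/- Let α ∈ ℝ^s be totally irrational, A a bounded remainder set for the rotation by α with constant C, i.e. |#{0 ≤ n < N : nα + x ∈ A mod ℤ^s} − N|A|| ≤ C for all x and N. For fixed x, list the return times {n ∈ ℤ : nα + x ∈ A mod ℤ^s} = {ℓ_i}_{i∈ℤ} in increasing order with ℓ_{-1} < 0 ≤ ℓ_0. Then for all i ∈ ℤ, |ℓ_i − i/|A|| ≤ C/|A|. -/
open MeasureTheory

noncomputable section

open Classical in
/-- Counting lemma: the number of `n ∈ [0, N)` with `p + n` in the range of the
strictly monotone enumeration `ℓ` equals `(v - u).toNat`, provided the visit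
indices `j` with `p ≤ ℓ j < p + N` are exactly those with `u ≤ j < v`. -/
lemma count_filter_range (ℓ : ℤ → ℤ) (hmono : StrictMono ℓ) (p : ℤ) (N : ℕ) (u v : ℤ)
    (hu : ∀ j, p ≤ ℓ j ↔ u ≤ j) (hv : ∀ j, ℓ j < p + N ↔ j < v) :
    ((Finset.range N).filter (fun n : ℕ => (p + (n : ℤ)) ∈ Set.range ℓ)).card
      = (v - u).toNat := by
  have hbij : (Finset.Ico u v).card
      = ((Finset.range N).filter (fun n : ℕ => (p + (n : ℤ)) ∈ Set.range ℓ)).card := by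
    refine Finset.card_bij (fun j _ => (ℓ j - p).toNat) ?_ ?_ ?_
    · intro j hj
      rw [Finset.mem_Ico] at hj
      have h1 : p ≤ ℓ j := (hu j).mpr hj.1
      have h2 : ℓ j < p + N := (hv j).mpr hj.2
      rw [Finset.mem_filter, Finset.mem_range]
      constructor
      · omega
      · have : p + ((ℓ j - p).toNat : ℤ) = ℓ j := by omega
        rw [this]; exact Set.mem_range_self j
    · intro j₁ h₁ j₂ h₂ h
      rw [Finset.mem_Ico] at h₁ h₂
      have e1 : p ≤ ℓ j₁ := (hu j₁).mpr h₁.1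
      have e2 : p ≤ ℓ j₂ := (hu j₂).mpr h₂.1
      have : ℓ j₁ = ℓ j₂ := by omega
      exact hmono.injective this
    · intro n hn
      rw [Finset.mem_filter, Finset.mem_range] at hn
      obtain ⟨j, hj⟩ := hn.2
      refine ⟨j, ?_, ?_⟩
      · rw [Finset.mem_Ico]
        constructor
        · exact (hu j).mp (by omega)
        · exact (hv j).mp (by omega)
      · omega
  rw [← hbij, Int.card_Ico]

open Classical in
/-- The Birkhoff sum of the indicator counts the visit times. -/
lemma sum_indicator_eq_count (s : ℕ) (α : Fin s → ℝ) (A : Set (Fin s → ℝ))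
    (x : Fin s → ℝ) (ℓ : ℤ → ℤ)
    (hrange : {n : ℤ | ModMem s (x + n • α) A} = Set.range ℓ)
    (p : ℤ) (N : ℕ) :
    (∑ n ∈ Finset.range N,
        Set.indicator {z : Fin s → ℝ | ModMem s z A} (fun _ => (1:ℝ)) ((x + p • α) + n • α))
      = ((Finset.range N).filter (fun n : ℕ => (p + (n : ℤ)) ∈ Set.range ℓ)).card := by
  have hterm : ∀ n : ℕ,
      Set.indicator {z : Fin s → ℝ | ModMem s z A} (fun _ => (1:ℝ)) ((x + p • α) + n • α)
        = if (p + (n : ℤ)) ∈ Set.range ℓ then (1:ℝ) else 0 := by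
    intro n
    have harg : (x + p • α) + n • α = x + (p + (n : ℤ)) • α := by
      rw [add_zsmul, natCast_zsmul, add_assoc]
    rw [harg, Set.indicator_apply]
    have hmem : (x + (p + (n : ℤ)) • α ∈ {z : Fin s → ℝ | ModMem s z A})
        ↔ (p + (n : ℤ)) ∈ Set.range ℓ := by
      rw [← hrange]; rfl
    by_cases h : (p + (n : ℤ)) ∈ Set.range ℓ
    · rw [if_pos (hmem.mpr h), if_pos h]
    · rw [if_neg (fun hc => h (hmem.mp hc)), if_neg h]
  rw [Finset.sum_congr rfl (fun n _ => hterm n), Finset.sum_boole]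

/-- If `A` is a BRS for the totally irrational rotation by `α` with
uniform constant `C`, and `ℓ : ℤ → ℤ` is the increasing enumeration of the visit
times `{n ∈ ℤ : x + nα ∈ A mod ℤ^s}` normalized by `ℓ (-1) < 0 ≤ ℓ 0`, then
`|ℓ i − i/|A|| ≤ C/|A|` for all `i ∈ ℤ`. -/
theorem return_times_close_to_arithmetic
    (s : ℕ) (α : Fin s → ℝ) (hα : TotallyIrrational s α)
    (A : Set (Fin s → ℝ)) (hApos : 0 < (volume A).toReal)
    (C : ℝ)
    (hBRS : ∀ (y : Fin s → ℝ) (N : ℕ),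
      |(∑ n ∈ Finset.range N,
          Set.indicator {z : Fin s → ℝ | ModMem s z A} (fun _ => (1:ℝ)) (y + n • α))
        - N * (volume A).toReal| ≤ C)
    (x : Fin s → ℝ) (ℓ : ℤ → ℤ) (hmono : StrictMono ℓ)
    (hnorm : ℓ (-1) < 0 ∧ 0 ≤ ℓ 0)
    (hrange : {n : ℤ | ModMem s (x + n • α) A} = Set.range ℓ) :
    ∀ i : ℤ, |(ℓ i : ℝ) - (i : ℝ) / (volume A).toReal| ≤ C / (volume A).toReal := by
  classical
  intro i
  set a := (volume A).toReal with ha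
  -- sign of ℓ j is determined by sign of j
  have h0 : ∀ j : ℤ, 0 ≤ ℓ j ↔ 0 ≤ j := by
    intro j
    constructor
    · intro h
      by_contra hj
      push_neg at hj
      have : ℓ j ≤ ℓ (-1) := hmono.monotone (by omega)
      have := hnorm.1
      omega
    · intro h
      exact le_trans hnorm.2 (hmono.monotone h)
  -- key estimate: |ℓ i * a - i| ≤ C
  have key : |(ℓ i : ℝ) * a - (i : ℝ)| ≤ C := by
    rcases le_or_gt 0 i with hi | hi
    · -- i ≥ 0 : take p = 0, N = (ℓ i).toNat
      have hℓi : 0 ≤ ℓ i := (h0 i).mpr hi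
      have hcount := count_filter_range ℓ hmono 0 (ℓ i).toNat 0 i
        (fun j => by simpa using h0 j)
        (fun j => by
          have : (0 : ℤ) + ((ℓ i).toNat : ℤ) = ℓ i := by omega
          rw [this, hmono.lt_iff_lt])
      have hsum := sum_indicator_eq_count s α A x ℓ hrange 0 (ℓ i).toNat
      have hB := hBRS (x + (0 : ℤ) • α) (ℓ i).toNat
      rw [hsum, hcount] at hB
      have c1 : (((i - 0).toNat : ℕ) : ℝ) = (i : ℝ) := by
        have : ((i - 0).toNat : ℤ) = i := by omega
        exact_mod_cast congrArg (Int.cast : ℤ → ℝ) this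
      have c2 : (((ℓ i).toNat : ℕ) : ℝ) = ((ℓ i : ℤ) : ℝ) := by
        have : (((ℓ i).toNat : ℕ) : ℤ) = ℓ i := by omega
        exact_mod_cast congrArg (Int.cast : ℤ → ℝ) this
      rw [c1, c2] at hB
      calc |(ℓ i : ℝ) * a - (i : ℝ)| = |(i : ℝ) - (ℓ i : ℝ) * a| := abs_sub_comm _ _
        _ ≤ C := hB
    · -- i < 0 : take p = ℓ i, N = (-ℓ i).toNat
      have hℓi : ℓ i < 0 := by
        have := (h0 i)
        omega
      have hcount := count_filter_range ℓ hmono (ℓ i) (-ℓ i).toNat i 0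
        (fun j => by rw [hmono.le_iff_le])
        (fun j => by
          have : ℓ i + (((-ℓ i).toNat : ℕ) : ℤ) = 0 := by omega
          rw [this]
          have := h0 j
          omega)
      have hsum := sum_indicator_eq_count s α A x ℓ hrange (ℓ i) (-ℓ i).toNat
      have hB := hBRS (x + (ℓ i) • α) (-ℓ i).toNat
      rw [hsum, hcount] at hB
      have c1 : (((0 - i).toNat : ℕ) : ℝ) = -(i : ℝ) := by
        have : (((0 - i).toNat : ℕ) : ℤ) = -i := by omega
        have h2 := congrArg (Int.cast : ℤ → ℝ) this
        push_cast at h2 ⊢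
        linarith
      have c2 : (((-ℓ i).toNat : ℕ) : ℝ) = -((ℓ i : ℤ) : ℝ) := by
        have : (((-ℓ i).toNat : ℕ) : ℤ) = -(ℓ i) := by omega
        have h2 := congrArg (Int.cast : ℤ → ℝ) this
        push_cast at h2 ⊢
        linarith
      rw [c1, c2] at hB
      rw [show (-(i : ℝ) - (-((ℓ i : ℤ) : ℝ)) * a) = -((i : ℝ) - (ℓ i : ℝ) * a) from by ring, abs_neg, abs_sub_comm] at hB
      exact hB
  have ha0 : a ≠ 0 := ne_of_gt hApos
  have heq : (ℓ i : ℝ) - (i : ℝ) / a = ((ℓ i : ℝ) * a - (i : ℝ)) / a := by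
    field_simp
  rw [heq, abs_div, abs_of_pos hApos]
  gcongr
end
end

section
/- Let Y' = {(n_1, …, n_d) ∈ ℤ^d : n_1 α ∈ A − γ(n_2,…,n_d) mod ℤ^s}, where A is a BRS for the totally irrational rotation by α ∈ ℝ^s with constant C independent of the starting point. Then the map sending (ℓ_i(n_2,…,n_d), n_2, …, n_d) ↦ (i/|A|, n_2, …, n_d), where {ℓ_i(n_2,…,n_d)}_{i∈ℤ} is the increasing enumeration of {n_1 ∈ ℤ : n_1 α ∈ A − γ(n_2,…,n_d) mod ℤ^s} with ℓ_{-1} < 0 ≤ ℓ_0, is a bijection from Y' to the lattice |A|^{-1}ℤ × ℤ^{d-1} moving every point by at most C/|A| in sup-norm. Hence Y' is bounded distance to a lattice. -/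
open MeasureTheory

noncomputable section

noncomputable section YprimeHelpers
open MeasureTheory

section
variable {s m : ℕ} {α : Fin s → ℝ} {A : Set (Fin s → ℝ)}
  {γ : (Fin m → ℤ) → (Fin s → ℝ)} {ℓ : (Fin m → ℤ) → ℤ → ℤ}

open Classical in
lemma sum_ind_eq_card
    (hrange : ∀ n : Fin m → ℤ,
      {n₁ : ℤ | ModMem s (n₁ • α + γ n) A} = Set.range (ℓ n))
    (n : Fin m → ℤ) (a : ℤ) (N : ℕ) :
    (∑ k ∈ Finset.range N,
      Set.indicator {z : Fin s → ℝ | ModMem s z A} (fun _ => (1:ℝ))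
        ((γ n + a • α) + k • α))
    = ((Finset.range N).filter
        (fun k : ℕ => (a + (k:ℤ)) ∈ Set.range (ℓ n))).card := by
  have h : ∀ k ∈ Finset.range N,
      Set.indicator {z : Fin s → ℝ | ModMem s z A} (fun _ => (1:ℝ))
        ((γ n + a • α) + k • α)
      = if (a + (k:ℤ)) ∈ Set.range (ℓ n) then (1:ℝ) else 0 := by
    intro k _
    have hpt : (γ n + a • α) + k • α = (a + (k:ℤ)) • α + γ n := by
      rw [add_smul]
      push_cast [natCast_zsmul]
      ring
    have hk' : ((a + (k:ℤ)) ∈ {n₁ : ℤ | ModMem s (n₁ • α + γ n) A})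
        ↔ (a + (k:ℤ)) ∈ Set.range (ℓ n) := by rw [hrange n]
    rw [hpt]
    by_cases hk : (a + (k:ℤ)) ∈ Set.range (ℓ n)
    · rw [if_pos hk]
      exact Set.indicator_of_mem
        (show ((a+(k:ℤ)) • α + γ n) ∈ {z : Fin s → ℝ | ModMem s z A} from hk'.mpr hk) _
    · rw [if_neg hk]
      exact Set.indicator_of_notMem
        (show ((a+(k:ℤ)) • α + γ n) ∉ {z : Fin s → ℝ | ModMem s z A} from
          fun hc => hk (hk'.mp hc)) _
  rw [Finset.sum_congr rfl h, Finset.sum_boole]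


open Classical in
lemma card_nonneg_case (hmono : ∀ n, StrictMono (ℓ n))
    (hnorm : ∀ n, ℓ n (-1) < 0 ∧ 0 ≤ ℓ n 0)
    (n : Fin m → ℤ) (i : ℤ) (h0i : 0 ≤ i) :
    ((Finset.range (ℓ n i).toNat).filter
      (fun k : ℕ => ((0:ℤ) + (k:ℤ)) ∈ Set.range (ℓ n))).card = i.toNat := by
  have hpos : ∀ j : ℤ, 0 ≤ j → 0 ≤ ℓ n j :=
    fun j hj => (hnorm n).2.trans ((hmono n).monotone hj)
  rw [← Finset.card_range i.toNat]
  refine (Finset.card_bij (fun (j : ℕ) _ => (ℓ n (j:ℤ)).toNat) ?_ ?_ ?_).symm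
  · intro j hj
    simp only [Finset.mem_range] at hj
    have hji : (j:ℤ) < i := by omega
    have h1 : ℓ n (j:ℤ) < ℓ n i := hmono n hji
    have h2 : 0 ≤ ℓ n (j:ℤ) := hpos _ (by positivity)
    simp only [Finset.mem_filter, Finset.mem_range]
    refine ⟨by omega, ?_⟩
    have : (0:ℤ) + ((ℓ n (j:ℤ)).toNat : ℤ) = ℓ n (j:ℤ) := by omega
    rw [this]; exact ⟨_, rfl⟩
  · intro j₁ h₁ j₂ h₂ heq
    simp only [Finset.mem_range] at h₁ h₂
    have heq' : (ℓ n (j₁:ℤ)).toNat = (ℓ n (j₂:ℤ)).toNat := heq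
    have e₁ : 0 ≤ ℓ n (j₁:ℤ) := hpos _ (by positivity)
    have e₂ : 0 ≤ ℓ n (j₂:ℤ) := hpos _ (by positivity)
    have : ℓ n (j₁:ℤ) = ℓ n (j₂:ℤ) := by omega
    have := (hmono n).injective this
    omega
  · intro k hk
    simp only [Finset.mem_filter, Finset.mem_range] at hk
    obtain ⟨hkN, j, hj⟩ := hk
    have hj0 : 0 ≤ j := by
      by_contra h
      have : ℓ n j ≤ ℓ n (-1) := (hmono n).monotone (by omega)
      have := (hnorm n).1
      omega
    have hLi : 0 ≤ ℓ n i := hpos _ h0i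
    have hji : j < i := by
      have := (hmono n).lt_iff_lt (a := j) (b := i)
      omega
    refine ⟨j.toNat, by simp only [Finset.mem_range]; omega, ?_⟩
    show (ℓ n ((j.toNat : ℕ) : ℤ)).toNat = k
    have : ((j.toNat : ℕ) : ℤ) = j := by omega
    rw [this]; omega

open Classical in
lemma card_neg_case (hmono : ∀ n, StrictMono (ℓ n))
    (hnorm : ∀ n, ℓ n (-1) < 0 ∧ 0 ≤ ℓ n 0)
    (n : Fin m → ℤ) (i : ℤ) (hi : i < 0) :
    ((Finset.range (-(ℓ n i)).toNat).filter
      (fun k : ℕ => (ℓ n i + (k:ℤ)) ∈ Set.range (ℓ n))).card = (-i).toNat := by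
  have hneg : ∀ j : ℤ, j < 0 → ℓ n j < 0 :=
    fun j hj => lt_of_le_of_lt ((hmono n).monotone (by omega)) (hnorm n).1
  rw [← Finset.card_range (-i).toNat]
  refine (Finset.card_bij (fun (j : ℕ) _ => (ℓ n (i + (j:ℤ)) - ℓ n i).toNat) ?_ ?_ ?_).symm
  · intro j hj
    simp only [Finset.mem_range] at hj
    have h1 : ℓ n i ≤ ℓ n (i + (j:ℤ)) := (hmono n).monotone (by omega)
    have h2 : ℓ n (i + (j:ℤ)) < 0 := hneg _ (by omega)
    simp only [Finset.mem_filter, Finset.mem_range]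
    refine ⟨by omega, ?_⟩
    have : ℓ n i + ((ℓ n (i + (j:ℤ)) - ℓ n i).toNat : ℤ) = ℓ n (i + (j:ℤ)) := by omega
    rw [this]; exact ⟨_, rfl⟩
  · intro j₁ h₁ j₂ h₂ heq
    simp only [Finset.mem_range] at h₁ h₂
    have heq' : (ℓ n (i + (j₁:ℤ)) - ℓ n i).toNat = (ℓ n (i + (j₂:ℤ)) - ℓ n i).toNat := heq
    have e₁ : ℓ n i ≤ ℓ n (i + (j₁:ℤ)) := (hmono n).monotone (by omega)
    have e₂ : ℓ n i ≤ ℓ n (i + (j₂:ℤ)) := (hmono n).monotone (by omega)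
    have : ℓ n (i + (j₁:ℤ)) = ℓ n (i + (j₂:ℤ)) := by omega
    have := (hmono n).injective this
    omega
  · intro k hk
    simp only [Finset.mem_filter, Finset.mem_range] at hk
    obtain ⟨hkN, j, hj⟩ := hk
    have hLi : ℓ n i < 0 := hneg _ hi
    have hji : i ≤ j := by
      have := (hmono n).le_iff_le (a := i) (b := j)
      omega
    have hj0 : j < 0 := by
      by_contra h
      have : ℓ n 0 ≤ ℓ n j := (hmono n).monotone (by omega)
      have := (hnorm n).2
      omega
    refine ⟨(j - i).toNat, by simp only [Finset.mem_range]; omega, ?_⟩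
    show (ℓ n (i + (((j - i).toNat : ℕ) : ℤ)) - ℓ n i).toNat = k
    have : i + (((j - i).toNat : ℕ) : ℤ) = j := by omega
    rw [this]; omega



lemma Yprime_key_bound {C : ℝ}
    (hBRS : ∀ (y : Fin s → ℝ) (N : ℕ),
      |(∑ n ∈ Finset.range N,
          Set.indicator {z : Fin s → ℝ | ModMem s z A} (fun _ => (1:ℝ)) (y + n • α))
        - N * (volume A).toReal| ≤ C)
    (hmono : ∀ n, StrictMono (ℓ n))
    (hnorm : ∀ n, ℓ n (-1) < 0 ∧ 0 ≤ ℓ n 0)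
    (hrange : ∀ n : Fin m → ℤ,
      {n₁ : ℤ | ModMem s (n₁ • α + γ n) A} = Set.range (ℓ n))
    (n : Fin m → ℤ) (i : ℤ) :
    |(i : ℝ) - (ℓ n i : ℝ) * (volume A).toReal| ≤ C := by
  rcases le_or_gt 0 i with h0i | hi
  · have hL0 : 0 ≤ ℓ n i := (hnorm n).2.trans ((hmono n).monotone h0i)
    have hb := hBRS (γ n + (0:ℤ) • α) (ℓ n i).toNat
    rw [sum_ind_eq_card hrange n 0 _, card_nonneg_case hmono hnorm n i h0i] at hb
    have e1 : ((i.toNat : ℕ) : ℝ) = (i : ℝ) := by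
      rw [← Int.cast_natCast, Int.toNat_of_nonneg h0i]
    have e2 : (((ℓ n i).toNat : ℕ) : ℝ) = ((ℓ n i : ℤ) : ℝ) := by
      rw [← Int.cast_natCast, Int.toNat_of_nonneg hL0]
    rw [e1, e2] at hb
    exact hb
  · have hL0 : ℓ n i < 0 := lt_of_le_of_lt ((hmono n).monotone (by omega : i ≤ -1)) (hnorm n).1
    have hb := hBRS (γ n + (ℓ n i) • α) (-(ℓ n i)).toNat
    rw [sum_ind_eq_card hrange n (ℓ n i) _, card_neg_case hmono hnorm n i hi] at hb
    have e1 : (((-i).toNat : ℕ) : ℝ) = ((-i : ℤ) : ℝ) := by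
      rw [← Int.cast_natCast, Int.toNat_of_nonneg (by omega)]
    have e2 : (((-(ℓ n i)).toNat : ℕ) : ℝ) = ((-(ℓ n i) : ℤ) : ℝ) := by
      rw [← Int.cast_natCast, Int.toNat_of_nonneg (by omega)]
    rw [e1, e2] at hb
    have : (i : ℝ) - (ℓ n i : ℝ) * (volume A).toReal
        = -(((-i : ℤ) : ℝ) - ((-(ℓ n i) : ℤ) : ℝ) * (volume A).toReal) := by
      push_cast; ring
    rw [this, abs_neg]
    exact hb

end
end YprimeHelpers

end
noncomputable section

/-- With `A` a BRS for `α` with uniform constant `C`, `γ` arbitrary,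
and `Y' = {(n₁, n) ∈ ℤ × ℤ^m : n₁α + γ(n) ∈ A mod ℤ^s}` (written with
`d = m + 1`), the map `(ℓ_i(n), n) ↦ (i/|A|, n)` is a bijection from `Y'` onto
the lattice `|A|⁻¹ℤ × ℤ^m` moving each point by at most `C/|A|`; hence `Y'` is
bounded distance to a lattice. -/
theorem Yprime_BD_to_lattice
    (s m : ℕ) (α : Fin s → ℝ) (hα : TotallyIrrational s α)
    (A : Set (Fin s → ℝ)) (hApos : 0 < (volume A).toReal)
    (C : ℝ)
    (hBRS : ∀ (y : Fin s → ℝ) (N : ℕ),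
      |(∑ n ∈ Finset.range N,
          Set.indicator {z : Fin s → ℝ | ModMem s z A} (fun _ => (1:ℝ)) (y + n • α))
        - N * (volume A).toReal| ≤ C)
    (γ : (Fin m → ℤ) → (Fin s → ℝ))
    -- increasing enumerations of the fibers of `Y'`:
    (ℓ : (Fin m → ℤ) → ℤ → ℤ)
    (hmono : ∀ n, StrictMono (ℓ n))
    (hnorm : ∀ n, ℓ n (-1) < 0 ∧ 0 ≤ ℓ n 0)
    (hrange : ∀ n : Fin m → ℤ,
      {n₁ : ℤ | ModMem s (n₁ • α + γ n) A} = Set.range (ℓ n)) :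
    ∃ F : (ℝ × (Fin m → ℝ)) → (ℝ × (Fin m → ℝ)),
      (∀ (n : Fin m → ℤ) (i : ℤ),
        F ((ℓ n i : ℝ), fun j => (n j : ℝ)) =
          ((i : ℝ) / (volume A).toReal, fun j => (n j : ℝ))) ∧
      Set.BijOn F
        {p | ∃ (n₁ : ℤ) (n : Fin m → ℤ), ModMem s (n₁ • α + γ n) A ∧
          p = ((n₁ : ℝ), fun j => (n j : ℝ))}
        {q | ∃ (i : ℤ) (n : Fin m → ℤ),
          q = ((i : ℝ) / (volume A).toReal, fun j => (n j : ℝ))} ∧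
      (∀ p ∈ {p : ℝ × (Fin m → ℝ) | ∃ (n₁ : ℤ) (n : Fin m → ℤ),
          ModMem s (n₁ • α + γ n) A ∧ p = ((n₁ : ℝ), fun j => (n j : ℝ))},
        |(F p).1 - p.1| ≤ C / (volume A).toReal ∧ (F p).2 = p.2) := by
  classical
  set vol := (volume A).toReal with hvol
  have key : ∀ (n : Fin m → ℤ) (i : ℤ), |(i : ℝ) - (ℓ n i : ℝ) * vol| ≤ C :=
    fun n i => Yprime_key_bound hBRS hmono hnorm hrange n i
  have hφ : ∀ (n : Fin m → ℤ) (i : ℤ), |(i : ℝ) / vol - (ℓ n i : ℝ)| ≤ C / vol := by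
    intro n i
    have hne : vol ≠ 0 := ne_of_gt hApos
    have : (i : ℝ) / vol - (ℓ n i : ℝ) = ((i : ℝ) - (ℓ n i : ℝ) * vol) / vol := by
      field_simp
    rw [this, abs_div, abs_of_pos hApos]
    gcongr
    exact key n i
  have hcast : ∀ (n n' : Fin m → ℤ),
      (fun j => ((n j : ℤ) : ℝ)) = (fun j => ((n' j : ℤ) : ℝ)) → n = n' := by
    intro n n' h
    funext j
    exact_mod_cast congrFun h j
  set P : (ℝ × (Fin m → ℝ)) → Prop :=
    fun p => ∃ (n : Fin m → ℤ) (i : ℤ), p = ((ℓ n i : ℝ), fun j => ((n j : ℤ) : ℝ)) with hP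
  set F : (ℝ × (Fin m → ℝ)) → (ℝ × (Fin m → ℝ)) :=
    fun p => if h : P p then ((h.choose_spec.choose : ℝ) / vol, p.2) else p with hFdef
  have hF : ∀ (n : Fin m → ℤ) (i : ℤ),
      F ((ℓ n i : ℝ), fun j => ((n j : ℤ) : ℝ))
        = ((i : ℝ) / vol, fun j => ((n j : ℤ) : ℝ)) := by
    intro n i
    have hp : P ((ℓ n i : ℝ), fun j => ((n j : ℤ) : ℝ)) := ⟨n, i, rfl⟩
    have hspec := hp.choose_spec.choose_spec
    have h2 : (fun j => ((n j : ℤ) : ℝ)) = (fun j => ((hp.choose j : ℤ) : ℝ)) :=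
      (Prod.ext_iff.mp hspec).2
    have hn : n = hp.choose := hcast _ _ h2
    have h1 : ((ℓ n i : ℤ) : ℝ) = ((ℓ hp.choose hp.choose_spec.choose : ℤ) : ℝ) :=
      (Prod.ext_iff.mp hspec).1
    have h1'' : ℓ n i = ℓ hp.choose hp.choose_spec.choose := by exact_mod_cast h1
    have h1' : ℓ n i = ℓ n hp.choose_spec.choose :=
      h1''.trans (congrArg (fun t => ℓ t hp.choose_spec.choose) hn).symm
    have hi : i = hp.choose_spec.choose := (hmono n).injective h1'
    simp only [hFdef, dif_pos hp]
    have hc : ((hp.choose_spec.choose : ℤ) : ℝ) = (i : ℝ) := by exact_mod_cast hi.symm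
    rw [hc]
  have hmem : ∀ (n : Fin m → ℤ) (n₁ : ℤ),
      ModMem s (n₁ • α + γ n) A ↔ n₁ ∈ Set.range (ℓ n) := by
    intro n n₁
    constructor
    · intro h
      rw [← hrange n]
      exact h
    · intro h
      have : n₁ ∈ {n₁ : ℤ | ModMem s (n₁ • α + γ n) A} := by rw [hrange n]; exact h
      exact this
  refine ⟨F, hF, ⟨?_, ?_, ?_⟩, ?_⟩
  · -- MapsTo
    rintro p ⟨n₁, n, hm, rfl⟩
    obtain ⟨i, hi⟩ := (hmem n n₁).mp hm
    refine ⟨i, n, ?_⟩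
    rw [← hi, hF n i]
  · -- InjOn
    rintro p ⟨n₁, n, hm, rfl⟩ q ⟨n₁', n', hm', rfl⟩ hFeq
    obtain ⟨i, hi⟩ := (hmem n n₁).mp hm
    obtain ⟨i', hi'⟩ := (hmem n' n₁').mp hm'
    rw [← hi, ← hi', hF n i, hF n' i'] at hFeq
    have h2 : (fun j => ((n j : ℤ) : ℝ)) = (fun j => ((n' j : ℤ) : ℝ)) :=
      (Prod.ext_iff.mp hFeq).2
    have hn : n = n' := hcast _ _ h2
    have h1 : (i : ℝ) / vol = (i' : ℝ) / vol := (Prod.ext_iff.mp hFeq).1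
    have : i = i' := by
      field_simp at h1
      exact_mod_cast h1
    rw [← hi, ← hi', hn, this]
  · -- SurjOn
    rintro q ⟨i, n, rfl⟩
    refine ⟨((ℓ n i : ℝ), fun j => ((n j : ℤ) : ℝ)), ⟨ℓ n i, n, ?_, rfl⟩, hF n i⟩
    exact (hmem n (ℓ n i)).mpr ⟨i, rfl⟩
  · -- bound
    rintro p ⟨n₁, n, hm, rfl⟩
    obtain ⟨i, hi⟩ := (hmem n n₁).mp hm
    rw [← hi, hF n i]
    exact ⟨hφ n i, rfl⟩


end
end

section
/- Let α ∈ ℝ^s be totally irrational and let A be a special region for α with associated lattice M generated by φ(v_1), …, φ(v_s) and β = φ(v_{s+1}). Then for every x ∈ A (not just points in the orbit of 0), the first return map S of the rotation by α to A satisfies S(x) ≡ x + β mod M. -/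
open MeasureTheory

noncomputable section

-- auxiliary development
namespace SRaux

variable {s : ℕ}

/-- last standard basis vector -/
def epsVec (s : ℕ) : Fin (s+1) → ℝ := Pi.single (Fin.last s) 1

/-- j-th standard basis vector, j < s -/
def eVec (s : ℕ) (j : Fin s) : Fin (s+1) → ℝ := Fin.snoc (Pi.single j (1:ℝ)) 0

lemma ker_phi {w : Fin (s+1) → ℝ} (h : phiProj s w = 0) :
    w = w (Fin.last s) • epsVec s := by
  funext i
  refine Fin.lastCases ?_ ?_ i
  · simp [epsVec]
  · intro j
    have hj := congrFun h j
    simp only [phiProj, Pi.zero_apply] at hj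
    simp [epsVec, hj, Pi.single_eq_of_ne (Fin.castSucc_lt_last j).ne]

lemma alphaExt_mem_Lam (α : Fin s → ℝ) : alphaExt s α ∈ Lam s α := by
  refine ⟨1, 0, ?_⟩
  funext i
  refine Fin.lastCases ?_ ?_ i <;>
    simp [Fin.snoc_last, Fin.snoc_castSucc, alphaExt]

lemma eVec_mem_Lam (α : Fin s → ℝ) (j : Fin s) : eVec s j ∈ Lam s α := by
  refine ⟨0, Pi.single j 1, ?_⟩
  funext i
  refine Fin.lastCases ?_ ?_ i <;>
    simp [eVec, Fin.snoc_last, Fin.snoc_castSucc, Pi.single_apply, apply_ite]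

lemma snoc_eq_sum (a : Fin s → ℤ) :
    (Fin.snoc (fun i => ((a i : ℤ) : ℝ)) 0 : Fin (s+1) → ℝ) = ∑ j, (a j : ℝ) • eVec s j := by
  funext i
  rw [Finset.sum_apply]
  refine Fin.lastCases ?_ ?_ i
  · simp [eVec, Fin.snoc_last, Pi.single_eq_of_ne (Fin.castSucc_lt_last _).ne]
  · intro i'
    simp [eVec, Fin.snoc_castSucc, Pi.single_apply, mul_ite, Finset.sum_ite_eq']

lemma epsVec_eq (α : Fin s → ℝ) :
    epsVec s = alphaExt s α - ∑ j, α j • eVec s j := by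
  funext i
  rw [Pi.sub_apply, Finset.sum_apply]
  refine Fin.lastCases ?_ ?_ i
  · simp [epsVec, eVec, alphaExt, Fin.snoc_last]
  · intro i'
    have hne : i'.castSucc ≠ Fin.last s := (Fin.castSucc_lt_last i').ne
    simp [epsVec, eVec, alphaExt, Fin.snoc_castSucc,
      Pi.single_apply, mul_ite, Finset.sum_ite_eq', hne]

variable {v : Fin (s+1) → (Fin (s+1) → ℝ)}

lemma zSpan_subset_span :
    zSpanSet v ⊆ (Submodule.span ℝ (Set.range v) : Submodule ℝ (Fin (s+1) → ℝ)) := by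
  rintro x ⟨c, rfl⟩
  exact Submodule.sum_mem _ fun i _ =>
    Submodule.smul_mem _ _ (Submodule.subset_span ⟨i, rfl⟩)

lemma mem_zSpan_self (i : Fin (s+1)) : v i ∈ zSpanSet v := by
  refine ⟨Pi.single i 1, ?_⟩
  have h : ∀ j, (((Pi.single i 1 : Fin (s+1) → ℤ) j : ℝ)) • v j
      = if j = i then v i else 0 := by
    intro j; by_cases h : j = i <;> simp [Pi.single_apply, h]
  rw [Finset.sum_congr rfl fun j _ => h j, Finset.sum_ite_eq' Finset.univ i]
  simp

lemma span_top {α : Fin s → ℝ} (hΛ : zSpanSet v = Lam s α) :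
    ⊤ ≤ Submodule.span ℝ (Set.range v) := by
  have hLam : Lam s α ⊆ (Submodule.span ℝ (Set.range v) : Set _) := by
    rw [← hΛ]; exact zSpan_subset_span
  have hsingle : ∀ j : Fin (s+1), Pi.single j (1:ℝ) ∈ Submodule.span ℝ (Set.range v) := by
    intro j
    refine Fin.lastCases ?_ ?_ j
    · rw [show Pi.single (Fin.last s) (1:ℝ) = epsVec s from rfl, epsVec_eq α]
      exact Submodule.sub_mem _ (hLam (alphaExt_mem_Lam α))
        (Submodule.sum_mem _ fun j _ => Submodule.smul_mem _ _ (hLam (eVec_mem_Lam α j)))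
    · intro i
      have h : Pi.single (Fin.castSucc i) (1:ℝ) = eVec s i := by
        funext l
        refine Fin.lastCases ?_ ?_ l
        · simp [eVec, Fin.snoc_last, Pi.single_eq_of_ne (Fin.castSucc_lt_last i).ne']
        · intro l'
          simp [eVec, Fin.snoc_castSucc, Pi.single_apply, Fin.castSucc_inj]
      rw [h]; exact hLam (eVec_mem_Lam α i)
  intro x _
  have hx : x = ∑ j, Pi.single j (x j) := (Finset.univ_sum_single x).symm
  rw [hx]
  refine Submodule.sum_mem _ fun j _ => ?_
  have : Pi.single j (x j) = x j • (Pi.single j (1:ℝ) : Fin (s+1) → ℝ) := by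
    rw [← Pi.single_smul, smul_eq_mul, mul_one]
  rw [this]
  exact Submodule.smul_mem _ _ (hsingle j)

lemma coord_sum (B : Module.Basis (Fin (s+1)) ℝ (Fin (s+1) → ℝ)) (hB : ⇑B = v)
    (c : Fin (s+1) → ℝ) (j : Fin (s+1)) :
    B.coord j (∑ i, c i • v i) = c j := by
  have h1 : ∀ i, B.coord j (c i • v i) = if i = j then c i else 0 := by
    intro i
    rw [← hB, Module.Basis.coord_apply, LinearEquiv.map_smul, Module.Basis.repr_self,
      Finsupp.smul_apply, Finsupp.single_apply, smul_eq_mul]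
    split <;> simp
  rw [map_sum, Finset.sum_congr rfl fun i _ => h1 i, Finset.sum_ite_eq' Finset.univ j]
  simp

lemma coord_sum_cast (B : Module.Basis (Fin (s+1)) ℝ (Fin (s+1) → ℝ)) (hB : ⇑B = v)
    (c : Fin s → ℝ) (j : Fin (s+1)) :
    B.coord j (∑ i : Fin s, c i • v i.castSucc) = (Fin.snoc c 0 : Fin (s+1) → ℝ) j := by
  have h : ∑ i : Fin s, c i • v i.castSucc
      = ∑ i : Fin (s+1), (Fin.snoc c 0 : Fin (s+1) → ℝ) i • v i := by
    rw [Fin.sum_univ_castSucc]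
    simp [Fin.snoc_castSucc, Fin.snoc_last]
  rw [h, coord_sum B hB]

lemma coord_last_int (B : Module.Basis (Fin (s+1)) ℝ (Fin (s+1) → ℝ)) (hB : ⇑B = v)
    {z : Fin (s+1) → ℝ} (hz : z ∈ zSpanSet v) :
    ∃ k : ℤ, B.coord (Fin.last s) z = k := by
  obtain ⟨c, rfl⟩ := hz
  exact ⟨c (Fin.last s), coord_sum B hB _ _⟩

lemma coord_eps_ne {α : Fin s → ℝ} (hα : TotallyIrrational s α)
    (hΛ : zSpanSet v = Lam s α)
    (B : Module.Basis (Fin (s+1)) ℝ (Fin (s+1) → ℝ)) (hB : ⇑B = v) :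
    B.coord (Fin.last s) (epsVec s) ≠ 0 := by
  intro h0
  obtain ⟨g, hg⟩ := coord_last_int B hB
    (show alphaExt s α ∈ zSpanSet v by rw [hΛ]; exact alphaExt_mem_Lam α)
  choose d hd using fun j : Fin s => coord_last_int B hB
    (show eVec s j ∈ zSpanSet v by rw [hΛ]; exact eVec_mem_Lam α j)
  have hcomb : (0:ℝ) = (g:ℝ) - ∑ j, α j * (d j : ℝ) := by
    rw [← h0, epsVec_eq α, map_sub, map_sum, hg]
    congr 1
    refine Finset.sum_congr rfl fun j _ => ?_
    rw [_root_.map_smul, hd j, smul_eq_mul]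
  have h2 : (∑ j, ((d j : ℤ) : ℝ) * α j) + ((-g : ℤ) : ℝ) = 0 := by
    push_cast
    have : ∑ j, (d j : ℝ) * α j = ∑ j, α j * (d j : ℝ) :=
      Finset.sum_congr rfl fun j _ => mul_comm _ _
    rw [this]; linarith
  obtain ⟨hdz, hgz⟩ := hα d (-g) h2
  -- now v (last) has coord 0, contradiction with coord = 1
  obtain ⟨n, a, hvl⟩ : v (Fin.last s) ∈ Lam s α := by
    rw [← hΛ]; exact mem_zSpan_self _
  have hco1 : B.coord (Fin.last s) (v (Fin.last s)) = 1 := by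
    rw [← hB, Module.Basis.coord_apply, Module.Basis.repr_self, Finsupp.single_eq_same]
  rw [hvl, snoc_eq_sum, map_add, _root_.map_smul, hg, map_sum] at hco1
  have hz2 : ∀ j ∈ Finset.univ, B.coord (Fin.last s) ((a j : ℝ) • eVec s j) = 0 := by
    intro j _
    rw [_root_.map_smul, hd j, smul_eq_mul]
    have : d j = 0 := congrFun hdz j
    simp [this]
  rw [Finset.sum_eq_zero hz2] at hco1
  have : g = 0 := by omega
  simp [this] at hco1

end SRaux

end

noncomputable section

/-- For a special region `A` for `α` with lattice `M` generated by
`φ(v_1),…,φ(v_s)` and `β = φ(v_{s+1})`, every point `x ∈ A` (not only the orbit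
of `0`) satisfies `S(x) ≡ x + β mod M` for the first return map `S` of the
rotation by `α` to `A`. -/
theorem first_return_is_translation_mod_M
    (s : ℕ) (α : Fin s → ℝ) (hα : TotallyIrrational s α)
    (v : Fin (s+1) → (Fin (s+1) → ℝ)) (hv : IsSpecialBasis s α v)
    (A : Set (Fin s → ℝ)) (hA : A = specialRegionOf s v) :
    ∀ x ∈ A, ∀ r : ℕ, 0 < r →
      (∀ n : ℕ, 0 < n → n < r → ¬ ModMem s (x + n • α) A) →
      ModMem s (x + r • α) A →
      -- `y ∈ A` is the representative of `S x = x + r α` in `A`: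
      ∀ y ∈ A, (∃ mv : Fin s → ℤ, x + r • α = y + intVec s mv) →
        y - (x + phiProj s (v (Fin.last s)))
          ∈ zSpanSet (fun i : Fin s => phiProj s (v i.castSucc)) := by
  classical
  obtain ⟨hS2, hΛ, hS4⟩ := hv
  have hspan := SRaux.span_top hΛ
  set B : Module.Basis (Fin (s+1)) ℝ (Fin (s+1) → ℝ) :=
    basisOfTopLeSpanOfCardEqFinrank v hspan (by simp) with hBdef
  have hB : ⇑B = v := coe_basisOfTopLeSpanOfCardEqFinrank _ _ _
  have hεne := SRaux.coord_eps_ne hα hΛ B hB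
  have hvLam : ∀ i, v i ∈ Lam s α := fun i => by
    rw [← hΛ]; exact SRaux.mem_zSpan_self i
  choose N aV hNa using hvLam
  have hVlast : ∀ i, v i (Fin.last s) = (N i : ℝ) := by
    intro i
    rw [hNa i]
    simp [alphaExt, Fin.snoc_last]
  have hVcast : ∀ i (j : Fin s), v i j.castSucc = (N i : ℝ) * α j + (aV i j : ℝ) := by
    intro i j
    rw [hNa i]
    simp [alphaExt, Fin.snoc_castSucc]
  have hS4' : ∀ I : Finset (Fin s), (∑ i ∈ I, N i.castSucc) + 1 ≤ N (Fin.last s) := by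
    intro I
    have h := hS4 I
    rw [hVlast] at h
    have h2 : ∑ i ∈ I, v i.castSucc (Fin.last s) = ((∑ i ∈ I, N i.castSucc : ℤ) : ℝ) := by
      push_cast
      exact Finset.sum_congr rfl fun i _ => hVlast _
    rw [h2] at h
    have h3 : ((∑ i ∈ I, N i.castSucc : ℤ) : ℝ) < ((N (Fin.last s) : ℤ) : ℝ) := by
      linarith
    have h4 : (∑ i ∈ I, N i.castSucc : ℤ) < N (Fin.last s) := by exact_mod_cast h3
    omega
  intro x hx r hr hmin hret y hy hrep
  obtain ⟨mv, hxy⟩ := hrep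
  rw [hA] at hx hy
  obtain ⟨p, ⟨t, ht, hp⟩, hpx⟩ := hx
  obtain ⟨q, ⟨u, hu, hqdef⟩, hqy⟩ := hy
  obtain ⟨w, ⟨b, hb, hwdef⟩, hwβ⟩ := hS2
  -- the lattice point z with φ(z) = rα - mv
  set z : Fin (s+1) → ℝ :=
    (((r:ℤ)):ℝ) • alphaExt s α + Fin.snoc (fun j => (((-mv j : ℤ)):ℝ)) 0 with hzdef
  have hzΛ : z ∈ Lam s α := ⟨(r:ℤ), fun j => -mv j, rfl⟩
  have hzspan : z ∈ zSpanSet v := by rw [hΛ]; exact hzΛ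
  obtain ⟨c, hz⟩ := hzspan
  set k : ℤ := c (Fin.last s) with hkdef
  have hzlast : z (Fin.last s) = (r : ℝ) := by
    simp [hzdef, alphaExt, Fin.snoc_last]
  have hzcast : ∀ j : Fin s, z j.castSucc = (r : ℝ) * α j - (mv j : ℝ) := by
    intro j
    simp [hzdef, alphaExt, Fin.snoc_castSucc]
    ring
  have hyx : ∀ j : Fin s, y j = x j + z j.castSucc := by
    intro j
    have h := congrFun hxy j
    simp only [Pi.add_apply, Pi.smul_apply, intVec] at h
    rw [nsmul_eq_mul] at h
    rw [hzcast j]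
    linarith
  -- q = p + z + δ ε
  have hD : phiProj s (q - (p + z)) = 0 := by
    funext j
    have hq1 : q j.castSucc = y j := congrFun hqy j
    have hp1 : p j.castSucc = x j := congrFun hpx j
    simp only [phiProj, Pi.sub_apply, Pi.add_apply, Pi.zero_apply]
    rw [hq1, hp1, hyx j]
    ring
  have hDe := SRaux.ker_phi hD
  set δ : ℝ := (q - (p + z)) (Fin.last s) with hδdef
  have hq' : q = p + z + δ • SRaux.epsVec s := by
    have h : q - (p + z) = δ • SRaux.epsVec s := hDe
    rw [← h]; abel
  -- v last = w + ρ ε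
  have hE : phiProj s (v (Fin.last s) - w) = 0 := by
    funext j
    have h := congrFun hwβ j
    simp only [phiProj, Pi.sub_apply, Pi.zero_apply]
    simp only [phiProj] at h
    rw [h]; ring
  have hEe := SRaux.ker_phi hE
  set ρ : ℝ := (v (Fin.last s) - w) (Fin.last s) with hρdef
  have hw' : v (Fin.last s) = w + ρ • SRaux.epsVec s := by
    have h : v (Fin.last s) - w = ρ • SRaux.epsVec s := hEe
    rw [← h]; abel
  -- split z
  set S : Fin (s+1) → ℝ := ∑ i : Fin s, ((c i.castSucc : ℤ) : ℝ) • v i.castSucc with hSdef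
  have hzsplit : z = S + ((k:ℤ):ℝ) • v (Fin.last s) := by
    rw [hz, Fin.sum_univ_castSucc]
  have hQ : q = (p + S + ((k:ℤ):ℝ) • w) + (((k:ℤ):ℝ) * ρ + δ) • SRaux.epsVec s := by
    rw [hq', hzsplit, hw']; module
  -- apply coord at last
  have hCq : B.coord (Fin.last s) q = 0 := by
    rw [hqdef, SRaux.coord_sum_cast B hB]
    simp [Fin.snoc_last]
  have hCp : B.coord (Fin.last s) p = 0 := by
    rw [hp, SRaux.coord_sum_cast B hB]
    simp [Fin.snoc_last]
  have hCS : B.coord (Fin.last s) S = 0 := by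
    rw [hSdef, SRaux.coord_sum_cast B hB]
    simp [Fin.snoc_last]
  have hCw : B.coord (Fin.last s) w = 0 := by
    rw [hwdef, SRaux.coord_sum_cast B hB]
    simp [Fin.snoc_last]
  have hcoef0 : ((k:ℤ):ℝ) * ρ + δ = 0 := by
    have hCQ := congrArg (B.coord (Fin.last s)) hQ
    rw [map_add, map_add, map_add, _root_.map_smul, _root_.map_smul,
      hCp, hCS, hCw, hCq, smul_eq_mul, smul_eq_mul] at hCQ
    have : (((k:ℤ):ℝ) * ρ + δ) * B.coord (Fin.last s) (SRaux.epsVec s) = 0 := by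
      linarith
    rcases mul_eq_zero.mp this with h | h
    · exact h
    · exact absurd h hεne
  have hq2 : q = p + S + ((k:ℤ):ℝ) • w := by
    rw [hQ, hcoef0, zero_smul, add_zero]
  -- coefficients
  have hcoef : ∀ i0 : Fin s, u i0 = t i0 + ((c i0.castSucc : ℤ) : ℝ) + ((k:ℤ):ℝ) * b i0 := by
    intro i0
    have hCQ := congrArg (B.coord i0.castSucc) hq2
    rw [hqdef, SRaux.coord_sum_cast B hB, map_add, map_add, _root_.map_smul,
      hp, SRaux.coord_sum_cast B hB, hSdef, SRaux.coord_sum_cast B hB,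
      hwdef, SRaux.coord_sum_cast B hB] at hCQ
    simpa [Fin.snoc_castSucc, smul_eq_mul] using hCQ
  -- integer equation for r
  have hrz : (r:ℤ) = (∑ i0 : Fin s, c i0.castSucc * N i0.castSucc) + k * N (Fin.last s) := by
    have h := congrFun hz (Fin.last s)
    rw [hzlast, Finset.sum_apply] at h
    have h2 : ∀ i, (((c i : ℤ):ℝ) • v i) (Fin.last s) = ((c i * N i : ℤ) : ℝ) := by
      intro i
      rw [Pi.smul_apply, smul_eq_mul, hVlast]
      push_cast; ring
    rw [Finset.sum_congr rfl fun i _ => h2 i, ← Int.cast_sum] at h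
    have h3 : (r:ℤ) = ∑ i, c i * N i := by exact_mod_cast h
    rw [h3, Fin.sum_univ_castSucc]
  -- floors
  have hfl : ∀ i0 : Fin s, ⌊t i0 + ((k:ℤ):ℝ) * b i0⌋ = -(c i0.castSucc) := by
    intro i0
    have he : t i0 + ((k:ℤ):ℝ) * b i0 = u i0 - ((c i0.castSucc : ℤ):ℝ) := by
      have := hcoef i0; linarith
    rw [he, Int.floor_sub_intCast,
      Int.floor_eq_zero_iff.mpr (Set.mem_Ico.mpr ⟨(hu i0).1, (hu i0).2⟩)]
    ring
  -- the counting function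
  set F : ℤ → ℤ := fun j =>
    j * N (Fin.last s) - ∑ i0 : Fin s, N i0.castSucc * ⌊t i0 + (j:ℝ) * b i0⌋ with hFdef
  have hF0 : F 0 = 0 := by
    have h : ∀ i0 : Fin s, ⌊t i0⌋ = 0 := fun i0 =>
      Int.floor_eq_zero_iff.mpr (Set.mem_Ico.mpr ⟨(ht i0).1, (ht i0).2⟩)
    simp [hFdef, h]
  have hFk : F k = r := by
    rw [hFdef]
    simp only []
    rw [Finset.sum_congr rfl fun i0 _ => by rw [hfl i0]]
    rw [hrz]
    have : ∑ i0 : Fin s, N i0.castSucc * -(c i0.castSucc)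
        = -∑ i0 : Fin s, c i0.castSucc * N i0.castSucc := by
      rw [← Finset.sum_neg_distrib]
      exact Finset.sum_congr rfl fun i0 _ => by ring
    rw [this]
    ring
  have hstep : ∀ (x0 b0 : ℝ), 0 ≤ b0 → b0 < 1 →
      ⌊x0 + b0⌋ = ⌊x0⌋ ∨ ⌊x0 + b0⌋ = ⌊x0⌋ + 1 := by
    intro x0 b0 hb0 hb1
    have h1 := Int.floor_le_floor (show x0 ≤ x0 + b0 by linarith)
    have h2 := Int.floor_le_floor (show x0 + b0 ≤ x0 + 1 by linarith)
    rw [Int.floor_add_one] at h2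
    omega
  have hmono : ∀ j : ℤ, F j + 1 ≤ F (j + 1) := by
    intro j
    have hd : ∀ i0 : Fin s, ⌊t i0 + ((j+1 : ℤ):ℝ) * b i0⌋ = ⌊t i0 + (j:ℝ) * b i0⌋ ∨
        ⌊t i0 + ((j+1 : ℤ):ℝ) * b i0⌋ = ⌊t i0 + (j:ℝ) * b i0⌋ + 1 := by
      intro i0
      have he : t i0 + ((j+1 : ℤ):ℝ) * b i0 = (t i0 + (j:ℝ) * b i0) + b i0 := by
        push_cast; ring
      rw [he]
      exact hstep _ _ (hb i0).1 (hb i0).2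
    set I : Finset (Fin s) := Finset.univ.filter fun i0 =>
      ⌊t i0 + ((j+1 : ℤ):ℝ) * b i0⌋ = ⌊t i0 + (j:ℝ) * b i0⌋ + 1 with hIdef
    have hsum : ∑ i0 : Fin s, N i0.castSucc * ⌊t i0 + ((j+1 : ℤ):ℝ) * b i0⌋
        = (∑ i0 : Fin s, N i0.castSucc * ⌊t i0 + (j:ℝ) * b i0⌋) + ∑ i0 ∈ I, N i0.castSucc := by
      rw [Finset.sum_filter, ← Finset.sum_add_distrib]
      refine Finset.sum_congr rfl fun i0 _ => ?_
      rcases hd i0 with h | h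
      · have hcond : ¬ (⌊t i0 + ((j+1 : ℤ):ℝ) * b i0⌋ = ⌊t i0 + (j:ℝ) * b i0⌋ + 1) := by
          rw [h]; omega
        rw [if_neg hcond, h]; ring
      · rw [if_pos h, h]; ring
    have hI := hS4' I
    have hF1 : F (j+1) = (j+1) * N (Fin.last s)
        - ((∑ i0 : Fin s, N i0.castSucc * ⌊t i0 + (j:ℝ) * b i0⌋) + ∑ i0 ∈ I, N i0.castSucc) := by
      rw [hFdef]
      simp only []
      rw [← hsum]
    rw [hF1, hFdef]
    simp only []
    have : ∑ i0 ∈ I, N i0.castSucc + 1 ≤ N (Fin.last s) := hI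
    nlinarith [this]
  have hFmono : StrictMono F := strictMono_int_of_lt_succ fun n => by
    have := hmono n; omega
  have hk1 : 1 ≤ k := by
    by_contra hcon
    push_neg at hcon
    have hkle : k ≤ 0 := by omega
    have := hFmono.le_iff_le.mpr hkle
    rw [hFk, hF0] at this
    omega
  -- return at time F 1
  have hF1ge : 1 ≤ F 1 := by
    have := hmono 0
    rw [hF0] at this
    simpa using this
  set n₁ : ℕ := (F 1).toNat with hn₁def
  have hn₁cast : (n₁ : ℤ) = F 1 := Int.toNat_of_nonneg (by omega)
  have hn₁pos : 0 < n₁ := by omega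
  have hmem : ModMem s (x + n₁ • α) A := by
    refine ⟨fun j => aV (Fin.last s) j - ∑ i0 : Fin s, ⌊t i0 + b i0⌋ * aV i0.castSucc j, ?_⟩
    rw [hA]
    refine ⟨∑ i0 : Fin s, Int.fract (t i0 + b i0) • v i0.castSucc,
      ⟨fun i0 => Int.fract (t i0 + b i0),
        fun i0 => ⟨Int.fract_nonneg _, Int.fract_lt_one _⟩, rfl⟩, ?_⟩
    funext j
    have hxj : x j = ∑ i0 : Fin s, t i0 * v i0.castSucc j.castSucc := by
      rw [← congrFun hpx j]
      simp only [phiProj, hp, Finset.sum_apply, Pi.smul_apply, smul_eq_mul]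
    have hβj : ∑ i0 : Fin s, b i0 * v i0.castSucc j.castSucc
        = v (Fin.last s) j.castSucc := by
      have h := congrFun hwβ j
      simp only [phiProj, hwdef, Finset.sum_apply, Pi.smul_apply, smul_eq_mul] at h
      exact h
    simp only [phiProj, Finset.sum_apply, Pi.smul_apply, smul_eq_mul,
      Pi.add_apply, intVec, nsmul_eq_mul, Pi.mul_apply, Pi.natCast_apply]
    have hfract : ∀ i0 : Fin s, Int.fract (t i0 + b i0) * v i0.castSucc j.castSucc
        = t i0 * v i0.castSucc j.castSucc + b i0 * v i0.castSucc j.castSucc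
          - (⌊t i0 + b i0⌋ : ℝ) * v i0.castSucc j.castSucc := by
      intro i0
      rw [Int.fract]
      ring
    rw [Finset.sum_congr rfl fun i0 _ => hfract i0]
    rw [Finset.sum_sub_distrib, Finset.sum_add_distrib, hβj]
    have hfloorsum : ∑ i0 : Fin s, (⌊t i0 + b i0⌋ : ℝ) * v i0.castSucc j.castSucc
        = (∑ i0 : Fin s, (⌊t i0 + b i0⌋ : ℝ) * (N i0.castSucc : ℝ)) * α j
          + ∑ i0 : Fin s, (⌊t i0 + b i0⌋ : ℝ) * (aV i0.castSucc j : ℝ) := by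
      rw [Finset.sum_mul, ← Finset.sum_add_distrib]
      refine Finset.sum_congr rfl fun i0 _ => ?_
      rw [hVcast]
      ring
    have hn₁real : (n₁ : ℝ) = (N (Fin.last s) : ℝ)
        - ∑ i0 : Fin s, (N i0.castSucc : ℝ) * (⌊t i0 + b i0⌋ : ℝ) := by
      have h1 : (n₁ : ℝ) = ((F 1 : ℤ) : ℝ) := by exact_mod_cast hn₁cast
      rw [h1, hFdef]
      push_cast
      simp only [one_mul]
      try ring
    rw [hfloorsum, ← hxj, hVcast]
    rw [hn₁real]
    push_cast
    have hc1 : ∑ i0 : Fin s, (⌊t i0 + b i0⌋ : ℝ) * (N i0.castSucc : ℝ)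
        = ∑ i0 : Fin s, (N i0.castSucc : ℝ) * (⌊t i0 + b i0⌋ : ℝ) :=
      Finset.sum_congr rfl fun i0 _ => mul_comm _ _
    rw [hc1]
    ring
  -- conclude k = 1
  have hge : r ≤ n₁ := by
    by_contra hcon
    push_neg at hcon
    exact hmin n₁ hn₁pos hcon hmem
  have hkle1 : k ≤ 1 := by
    have h1 : F k ≤ F 1 := by
      rw [hFk]
      omega
    exact hFmono.le_iff_le.mp h1
  have hk : k = 1 := le_antisymm hkle1 hk1
  -- final computation
  refine ⟨fun i0 => c i0.castSucc, ?_⟩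
  funext j
  simp only [Pi.sub_apply, Pi.add_apply, Finset.sum_apply, Pi.smul_apply, smul_eq_mul, phiProj]
  have hyj : y j = ∑ i0 : Fin s, u i0 * v i0.castSucc j.castSucc := by
    rw [← congrFun hqy j]
    simp only [phiProj, hqdef, Finset.sum_apply, Pi.smul_apply, smul_eq_mul]
  have hxj : x j = ∑ i0 : Fin s, t i0 * v i0.castSucc j.castSucc := by
    rw [← congrFun hpx j]
    simp only [phiProj, hp, Finset.sum_apply, Pi.smul_apply, smul_eq_mul]
  have hβj : v (Fin.last s) j.castSucc = ∑ i0 : Fin s, b i0 * v i0.castSucc j.castSucc := by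
    have h := congrFun hwβ j
    simp only [phiProj, hwdef, Finset.sum_apply, Pi.smul_apply, smul_eq_mul] at h
    exact h.symm
  rw [hyj, hxj, hβj, ← Finset.sum_add_distrib, ← Finset.sum_sub_distrib]
  refine Finset.sum_congr rfl fun i0 _ => ?_
  have h := hcoef i0
  rw [hk] at h
  push_cast at h
  linear_combination (v i0.castSucc j.castSucc) * h

end
end
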